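/- arXiv:2109.07816 — 10 statements merged into one kernel-verified Lean document; each statement's English description precedes it below -/
import Mathlib

section
/- Let S be a compact topological space, let (M_i)_{i∈I} be a family of discrete abelian groups, and give M = ⊕_{i∈I} M_i the discrete topology. Then the natural map ⊕_{i∈I} C(S, M_i) → C(S, M) (sending a finitely supported family of continuous maps to their pointwise sum viewed as a map to the direct sum) is a group isomorphism. -/
open DirectSum

/-- For a compact space `S` and a family of discrete abelian groups `M i`, with the
direct sum `⨁ i, M i` also given the discrete topology, the natural map
`⨁ i, C(S, M i) → C(S, ⨁ i, M i)` is a group isomorphism (i.e. bijective). -/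
theorem directSum_continuousMap_bijective
    {I : Type*} [DecidableEq I] {S : Type*} [TopologicalSpace S] [CompactSpace S]
    (M : I → Type*) [∀ i, AddCommGroup (M i)] [∀ i, TopologicalSpace (M i)]
    [∀ i, DiscreteTopology (M i)]
    [TopologicalSpace (⨁ i, M i)] [DiscreteTopology (⨁ i, M i)] :
    Function.Bijective
      (DirectSum.toAddMonoid
        (fun i =>
          (DirectSum.of M i).compLeftContinuous S (continuous_of_discreteTopology) :
          ∀ i, C(S, M i) →+ C(S, ⨁ i, M i))) := by
  classical
  set Φ := (DirectSum.toAddMonoid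
        (fun i =>
          (DirectSum.of M i).compLeftContinuous S (continuous_of_discreteTopology) :
          ∀ i, C(S, M i) →+ C(S, ⨁ i, M i))) with hΦ
  have key : ∀ (x : ⨁ i, C(S, M i)) (s : S) (j : I), (Φ x) s j = x j s := by
    intro x s j
    induction x using DirectSum.induction_on with
    | zero => simp
    | of i f =>
        rw [hΦ, DirectSum.toAddMonoid_of]
        show ((of M i) (f s)) j = ((of (fun i => C(S, M i)) i f) j) s
        by_cases h : i = j
        · subst h; rw [DirectSum.of_eq_same, DirectSum.of_eq_same]
        · rw [DirectSum.of_eq_of_ne _ _ _ (Ne.symm h), DirectSum.of_eq_of_ne _ _ _ (Ne.symm h)]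
          rfl
    | add a b ha hb =>
        simp [map_add, ha, hb]
  constructor
  · intro x y hxy
    refine DFinsupp.ext fun j => ContinuousMap.ext fun s => ?_
    have := key x s j
    rw [hxy, key] at this
    exact this.symm
  · intro f
    have hfin : (Set.range f).Finite := by
      have : IsCompact (Set.range f) := isCompact_range f.continuous
      exact this.finite ⟨inferInstance⟩
    set T : Finset I := hfin.toFinset.sup (fun v => v.support) with hT
    have hsupp : ∀ s : S, (f s).support ⊆ T := by
      intro s
      exact Finset.le_sup (f := fun v => DFinsupp.support v)
        (hfin.mem_toFinset.2 ⟨s, rfl⟩)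
    have gcont : ∀ i : I, Continuous (fun s => f s i) := fun i => by
      show Continuous ((fun v : ⨁ i, M i => v i) ∘ f)
      exact continuous_of_discreteTopology.comp f.continuous
    set x : ⨁ i, C(S, M i) :=
      DFinsupp.mk T (fun i => ⟨fun s => f s i, gcont i⟩) with hx
    refine ⟨x, ContinuousMap.ext fun s => DFinsupp.ext fun j => ?_⟩
    rw [key]
    by_cases h : j ∈ T
    · rw [hx]; simp [DFinsupp.mk_apply, h]
    · rw [hx]
      simp only [DFinsupp.mk_apply, h, dif_neg, not_false_iff]
      have : j ∉ (f s).support := fun hj => h (hsupp s hj)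
      simp only [DFinsupp.mem_support_iff, not_not] at this
      simp [this]
end

section
/- Let 0 → A → B → C → 0 be a short exact sequence of abelian groups where A, B, C are Hausdorff topological abelian groups, the maps are continuous, f : A → B is a closed map, and for every compact K ⊆ C there exists a compact B' ⊆ B with g(B') ⊇ K. Then for every compact Hausdorff space S that is projective in the category of compact Hausdorff spaces (extremally disconnected), the induced sequence 0 → C(S,A) → C(S,B) → C(S,C) → 0 of abelian groups is exact. -/
/-- Given a short exact sequence `0 → A → B → C → 0` of Hausdorff topological abelian
groups with continuous maps, where `f` is a closed map and every compact subset of `C`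
is contained in the image of a compact subset of `B`, the induced sequence
`0 → C(S,A) → C(S,B) → C(S,C) → 0` is exact for every extremally disconnected compact
Hausdorff space `S`. -/
theorem continuousMap_shortExact
    {A B C : Type*}
    [TopologicalSpace A] [AddCommGroup A] [IsTopologicalAddGroup A] [T2Space A]
    [TopologicalSpace B] [AddCommGroup B] [IsTopologicalAddGroup B] [T2Space B]
    [TopologicalSpace C] [AddCommGroup C] [IsTopologicalAddGroup C] [T2Space C]
    (f : A →+ B) (hf : Continuous f) (g : B →+ C) (hg : Continuous g)
    (hinj : Function.Injective f) (hsurj : Function.Surjective g)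
    (hexact : Set.range f = {b | g b = 0})
    (hclosed : IsClosedMap f)
    (hcompact : ∀ K : Set C, IsCompact K → ∃ B' : Set B, IsCompact B' ∧ K ⊆ g '' B')
    (S : Type*) [TopologicalSpace S] [CompactSpace S] [T2Space S]
    [ExtremallyDisconnected S] :
    Function.Injective (f.compLeftContinuous S hf : C(S, A) →+ C(S, B)) ∧
    (∀ h : C(S, B), (g.compLeftContinuous S hg) h = 0 ↔
      ∃ k : C(S, A), (f.compLeftContinuous S hf) k = h) ∧
    Function.Surjective (g.compLeftContinuous S hg : C(S, B) →+ C(S, C)) := by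
  have femb : Topology.IsClosedEmbedding f := Topology.IsClosedEmbedding.of_continuous_injective_isClosedMap hf hinj hclosed
  refine ⟨?_, ?_, ?_⟩
  · intro k₁ k₂ hk
    ext s
    exact hinj (ContinuousMap.congr_fun hk s)
  · intro h
    constructor
    · intro hgh
      -- h maps into range f
      have hmem : ∀ s : S, h s ∈ Set.range f := by
        intro s
        rw [hexact]
        exact ContinuousMap.congr_fun hgh s
      -- homeomorphism of A onto range f
      let e : A ≃ₜ Set.range f := femb.toIsEmbedding.toHomeomorph
      refine ⟨⟨fun s => e.symm ⟨h s, hmem s⟩, ?_⟩, ?_⟩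
      · exact e.symm.continuous.comp (Continuous.subtype_mk h.continuous _)
      · ext s
        have : f (e.symm ⟨h s, hmem s⟩) = ((e (e.symm ⟨h s, hmem s⟩)) : B) := rfl
        simp only [AddMonoidHom.compLeftContinuous_apply, ContinuousMap.comp_apply,
          ContinuousMap.coe_mk]
        rw [this, e.apply_symm_apply]
    · rintro ⟨k, rfl⟩
      ext s
      have : g (f (k s)) = 0 := by
        have : f (k s) ∈ {b | g b = 0} := hexact ▸ Set.mem_range_self (k s)
        exact this
      simpa using this
  · intro h
    -- the image of h is compact
    obtain ⟨B', hB'comp, hB'sub⟩ := hcompact (Set.range h) (isCompact_range h.continuous)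
    -- the pullback
    let D : Set (S × B) := {p | p.2 ∈ B' ∧ g p.2 = h p.1}
    have hDcomp : IsCompact D := by
      have hsub : D ⊆ Set.univ ×ˢ B' := fun p hp => ⟨Set.mem_univ _, hp.1⟩
      have hDclosed : IsClosed D := by
        have h1 : IsClosed {p : S × B | p.2 ∈ B'} :=
          (hB'comp.isClosed).preimage continuous_snd
        have h2 : IsClosed {p : S × B | g p.2 = h p.1} :=
          isClosed_eq (hg.comp continuous_snd) (h.continuous.comp continuous_fst)
        exact h1.inter h2
      exact ((isCompact_univ.prod hB'comp).of_isClosed_subset hDclosed hsub)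
    haveI : CompactSpace D := isCompact_iff_compactSpace.mp hDcomp
    let π : D → S := fun p => p.1.1
    have hπcont : Continuous π := continuous_fst.comp continuous_subtype_val
    have hπsurj : Function.Surjective π := by
      intro s
      obtain ⟨b, hbB', hgb⟩ := hB'sub (Set.mem_range_self s)
      exact ⟨⟨(s, b), hbB', hgb⟩, rfl⟩
    -- use projectivity via ULift to unify universes
    let S' := ULift.{max u_2 u_4} S
    let eS : S' ≃ₜ S := Homeomorph.ulift
    haveI : ExtremallyDisconnected S' := extremallyDisconnected_of_homeo eS.symm
    have hproj : CompactT2.Projective S' := CompactT2.ExtremallyDisconnected.projective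
    let π' : D → S' := fun d => eS.symm (π d)
    obtain ⟨σ, hσcont, hσ⟩ := hproj (f := fun s : S' => s) (g := π')
      continuous_id ((eS.symm.continuous).comp hπcont)
      (fun s => by obtain ⟨d, hd⟩ := hπsurj (eS s); exact ⟨d, by simp [π', hd]⟩)
      |>.imp (fun σ hσ => hσ)
    -- σ : S' → D, π' ∘ σ = id
    refine ⟨⟨fun s => ((σ (eS.symm s)).1.2 : B), ?_⟩, ?_⟩
    · exact (continuous_snd.comp (continuous_subtype_val.comp hσcont)).comp
        eS.symm.continuous
    · ext s
      have h1 : π' (σ (eS.symm s)) = eS.symm s := congrFun hσ (eS.symm s)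
      have h2 : π (σ (eS.symm s)) = s := by
        have := congrArg eS h1
        simpa [π'] using this
      have h3 : g ((σ (eS.symm s)).1.2) = h (π (σ (eS.symm s))) := (σ (eS.symm s)).2.2
      simp only [AddMonoidHom.compLeftContinuous_apply, ContinuousMap.comp_apply,
        ContinuousMap.coe_mk]
      rw [h3, h2]
end

section
/- Let 0 < r < 1, c > 0, and fix δ ∈ (0,1). Define Z((T))_{r,≤c} = { (a_n)_{n∈ℤ} : a_n ∈ ℤ, a_n = 0 for n sufficiently negative, and Σ_n |a_n| r^n ≤ c }, with the metric induced by the T-adic valuation d(f,g) = δ^{v(f-g)} where v(h) = inf{n : h_n ≠ 0}. Then Z((T))_{r,≤c} is a compact topological space. -/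
/-- `Z((T))_{r,≤c}`: integer Laurent series `∑ aₙ Tⁿ` with support bounded below and
weighted bound `∑ |aₙ| rⁿ ≤ c`. -/
def ZTrc (r c : ℝ) : Set (ℤ → ℤ) :=
  {a | (∃ N : ℤ, ∀ n < N, a n = 0) ∧
    Summable (fun n : ℤ => |(a n : ℝ)| * r ^ n) ∧
    ∑' n : ℤ, |(a n : ℝ)| * r ^ n ≤ c}

/-- The `T`-adic topology on `Z((T))_{r,≤c}` (the topology of the metric
`d(f,g) = δ^{v(f-g)}`): two series are close iff their coefficients agree up to a
large index, so the sets of series agreeing with a given one up to index `N` form a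
basis. -/
def tadicTopology (r c : ℝ) : TopologicalSpace (ZTrc r c) :=
  TopologicalSpace.generateFrom
    {U | ∃ (f : ZTrc r c) (N : ℤ),
      U = {g : ZTrc r c | ∀ n ≤ N, (g : ℤ → ℤ) n = (f : ℤ → ℤ) n}}

section aux
variable {r c : ℝ}

/-- Each single term is at most the total sum. -/
lemma ZTrc.term_le (hr0 : 0 < r) {a : ℤ → ℤ} (ha : a ∈ ZTrc r c) (n : ℤ) :
    |(a n : ℝ)| * r ^ n ≤ c := by
  obtain ⟨-, hsum, hle⟩ := ha
  refine le_trans (Summable.le_tsum hsum n fun j _ => ?_) hle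
  positivity

/-- Uniform lower bound on the support. -/
lemma ZTrc.exists_uniform_bound (hr0 : 0 < r) (hr1 : r < 1) :
    ∃ N₀ : ℤ, ∀ a ∈ ZTrc r c, ∀ n < N₀, a n = 0 := by
  obtain ⟨m, hm⟩ := pow_unbounded_of_one_lt c (one_lt_inv_iff₀.2 ⟨hr0, hr1⟩)
  refine ⟨-(m : ℤ), fun a ha n hn => ?_⟩
  by_contra h
  have h1 : (1 : ℝ) ≤ |(a n : ℝ)| := by
    rw [← Int.cast_abs]
    exact_mod_cast Int.one_le_abs (by simpa using h)
  have hcrn : c < r ^ n := by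
    calc c < r⁻¹ ^ m := hm
    _ = r ^ (-(m : ℤ)) := by rw [zpow_neg, ← inv_zpow]; norm_num
    _ ≤ r ^ n := zpow_le_zpow_right_of_le_one₀ hr0 hr1.le hn.le
  have := ZTrc.term_le hr0 ha n
  nlinarith [zpow_pos hr0 n]

/-- The tadic topology agrees with the subtype topology coming from the product of
discrete topologies. -/
lemma tadic_eq_induced (hr0 : 0 < r) (hr1 : r < 1) :
    tadicTopology r c = (inferInstance : TopologicalSpace (ZTrc r c)) := by
  obtain ⟨N₀, hN₀⟩ := ZTrc.exists_uniform_bound (c := c) hr0 hr1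
  apply le_antisymm
  · -- tadic ≤ induced: coordinate evaluations are tadic-continuous
    letI := tadicTopology r c
    have h1 : ∀ n m : ℤ, IsOpen {g : ZTrc r c | (g : ℤ → ℤ) n = m} := by
      intro n m
      have : {g : ZTrc r c | (g : ℤ → ℤ) n = m}
          = ⋃ f ∈ {g : ZTrc r c | (g : ℤ → ℤ) n = m},
              {g : ZTrc r c | ∀ k ≤ n, (g : ℤ → ℤ) k = (f : ℤ → ℤ) k} := by
        ext g
        simp only [Set.mem_setOf_eq, Set.mem_iUnion]
        constructor
        · exact fun h => ⟨g, h, fun k _ => rfl⟩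
        · rintro ⟨f, hf, h⟩; rw [h n le_rfl, hf]
      rw [this]
      exact isOpen_biUnion fun f _ => TopologicalSpace.GenerateOpen.basic _ ⟨f, n, rfl⟩
    have hval : Continuous (Subtype.val : ZTrc r c → ℤ → ℤ) := by
      rw [continuous_pi_iff]
      intro n
      rw [continuous_discrete_rng]
      exact h1 n
    exact continuous_iff_le_induced.1 hval
  · -- induced ≤ tadic: each generating set is open in induced topology
    rw [tadicTopology, TopologicalSpace.le_generateFrom_iff_subset_isOpen]
    rintro U ⟨f, N, rfl⟩
    simp only [Set.mem_setOf_eq]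
    have : {g : ZTrc r c | ∀ n ≤ N, (g : ℤ → ℤ) n = (f : ℤ → ℤ) n}
        = ⋂ n ∈ Finset.Icc N₀ N, {g : ZTrc r c | (g : ℤ → ℤ) n = (f : ℤ → ℤ) n} := by
      ext g
      simp only [Set.mem_setOf_eq, Set.mem_iInter, Finset.mem_Icc]
      constructor
      · exact fun h n hn => h n hn.2
      · intro h n hn
        rcases lt_or_ge n N₀ with h' | h'
        · rw [hN₀ g g.2 n h', hN₀ f f.2 n h']
        · exact h n ⟨h', hn⟩
    rw [this]
    refine isOpen_biInter_finset fun n _ => ?_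
    have : Continuous (fun g : ZTrc r c => (g : ℤ → ℤ) n) :=
      (continuous_apply n).comp continuous_subtype_val
    exact (isOpen_discrete {(f : ℤ → ℤ) n}).preimage this

/-- ZTrc is closed in the product topology. -/
lemma ZTrc.isClosed (hr0 : 0 < r) (hr1 : r < 1) : IsClosed (ZTrc r c) := by
  obtain ⟨N₀, hN₀⟩ := ZTrc.exists_uniform_bound (c := c) hr0 hr1
  rw [← closure_subset_iff_isClosed]
  intro a ha
  -- For every finite set of coordinates, there is an element of ZTrc agreeing with a.
  have key : ∀ F : Finset ℤ, ∃ b ∈ ZTrc r c, ∀ n ∈ F, b n = a n := by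
    intro F
    have hU : IsOpen {x : ℤ → ℤ | ∀ n ∈ F, x n = a n} := by
      have : {x : ℤ → ℤ | ∀ n ∈ F, x n = a n}
          = ⋂ n ∈ F, (fun x : ℤ → ℤ => x n) ⁻¹' {a n} := by
        ext x; simp [Set.mem_iInter]
      rw [this]
      exact isOpen_biInter_finset fun n _ =>
        (isOpen_discrete {a n}).preimage (continuous_apply n)
    obtain ⟨b, hb1, hb2⟩ := mem_closure_iff.1 ha _ hU (fun n _ => rfl)
    exact ⟨b, hb2, hb1⟩
  have hnonneg : 0 ≤ fun n : ℤ => |(a n : ℝ)| * r ^ n := by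
    intro n; positivity
  have hsums : ∀ u : Finset ℤ, ∑ n ∈ u, |(a n : ℝ)| * r ^ n ≤ c := by
    intro u
    obtain ⟨b, hb, hab⟩ := key u
    have : ∑ n ∈ u, |(a n : ℝ)| * r ^ n = ∑ n ∈ u, |(b n : ℝ)| * r ^ n :=
      Finset.sum_congr rfl fun n hn => by rw [hab n hn]
    rw [this]
    exact le_trans (Summable.sum_le_tsum u (fun n _ => by positivity) hb.2.1) hb.2.2
  refine ⟨⟨N₀, fun n hn => ?_⟩, summable_of_sum_le hnonneg hsums,
    Summable.tsum_le_of_sum_le (summable_of_sum_le hnonneg hsums) hsums⟩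
  obtain ⟨b, hb, hab⟩ := key {n}
  rw [← hab n (Finset.mem_singleton_self n)]
  exact hN₀ b hb n hn

/-- ZTrc is compact in the product topology. -/
lemma ZTrc.isCompact (hr0 : 0 < r) (hr1 : r < 1) (hc : 0 < c) :
    IsCompact (ZTrc r c) := by
  obtain ⟨N₀, hN₀⟩ := ZTrc.exists_uniform_bound (c := c) hr0 hr1
  have hK : IsCompact (Set.univ.pi fun n : ℤ =>
      {m : ℤ | |(m : ℝ)| * r ^ n ≤ c}) := by
    refine isCompact_univ_pi fun n => Set.Finite.isCompact ?_
    refine Set.Finite.subset (Set.finite_Icc (-⌈c / r ^ n⌉) ⌈c / r ^ n⌉) ?_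
    intro m hm
    simp only [Set.mem_setOf_eq] at hm
    have hrn : (0:ℝ) < r ^ n := zpow_pos hr0 n
    have h1 : |(m : ℝ)| ≤ c / r ^ n := (le_div_iff₀ hrn).2 hm
    have h2 : |m| ≤ ⌈c / r ^ n⌉ := by
      have : ((|m| : ℤ) : ℝ) ≤ ⌈c / r ^ n⌉ := by
        push_cast; exact h1.trans (Int.le_ceil _)
      exact_mod_cast this
    exact abs_le.mp h2
  exact hK.of_isClosed_subset (ZTrc.isClosed hr0 hr1)
    (fun a ha => by intro n _; exact ZTrc.term_le hr0 ha n)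

end aux

/-- For `0 < r < 1`, `c > 0` and `δ ∈ (0,1)`, the space `Z((T))_{r,≤c}` with the
`T`-adic topology is compact. -/
theorem ZTrc_compactSpace (r c δ : ℝ) (hr0 : 0 < r) (hr1 : r < 1) (hc : 0 < c)
    (hδ0 : 0 < δ) (hδ1 : δ < 1) :
    @CompactSpace (ZTrc r c) (tadicTopology r c) := by
  rw [tadic_eq_induced hr0 hr1]
  exact isCompact_iff_compactSpace.1 (ZTrc.isCompact hr0 hr1 hc)
end

section
/- Let 0 < r < 1 and c > 0. For each c < 1, the space Z((T))_{r,≤c} embeds into ℤ[[T]] (i.e., all elements have a_n = 0 for n < 0), and Z((T))_{r,≤c} is homeomorphic to the inverse limit of the finite discrete sets Z((T))^m_{r,≤c} = { (a_0,…,a_m) ∈ ℤ^{m+1} : Σ_{n=0}^m |a_n| r^n ≤ c }; in particular it is a profinite space. -/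
/-- The finite truncation sets: tuples `(a₀, …, a_m)` of integers with
`∑ |aₙ| rⁿ ≤ c`. -/
def ZTrcTrunc (r c : ℝ) (m : ℕ) : Set (Fin (m + 1) → ℤ) :=
  {v | ∑ i : Fin (m + 1), |((v i : ℤ) : ℝ)| * r ^ (i : ℕ) ≤ c}

namespace ZTrcAux

variable {r c : ℝ}

/-- Coefficients in negative degrees vanish. -/
lemma neg_zero (hr0 : 0 < r) (hr1 : r < 1) (hc1 : c < 1) {a : ℤ → ℤ}
    (ha : a ∈ ZTrc r c) {n : ℤ} (hn : n < 0) : a n = 0 := by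
  by_contra h
  obtain ⟨-, hs, hle⟩ := ha
  have h1 : (1 : ℝ) ≤ |(a n : ℝ)| := by
    have h2 : 1 ≤ |a n| := Int.one_le_abs h
    rw [← Int.cast_abs]
    exact_mod_cast h2
  have hrn : (1 : ℝ) < r ^ n := one_lt_zpow_of_neg₀ hr0 hr1 hn
  have hterm : (1 : ℝ) < |(a n : ℝ)| * r ^ n := by nlinarith
  have hts : |(a n : ℝ)| * r ^ n ≤ ∑' m : ℤ, |(a m : ℝ)| * r ^ m :=
    Summable.le_tsum hs n (fun m _ => by positivity)
  linarith

/-- The canonical `Finset ℤ` copy of `{0, …, m}`. -/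
def S (m : ℕ) : Finset ℤ :=
  (Finset.range (m + 1)).map ⟨(Nat.cast : ℕ → ℤ), fun a b h => by exact_mod_cast h⟩

lemma mem_S {m : ℕ} {n : ℤ} : n ∈ S m ↔ 0 ≤ n ∧ n ≤ m := by
  simp only [S, Finset.mem_map, Finset.mem_range, Function.Embedding.coeFn_mk]
  constructor
  · rintro ⟨k, hk, rfl⟩; exact ⟨Int.natCast_nonneg k, by exact (Nat.cast_le.mpr (Nat.lt_succ_iff.mp hk) : (k : ℤ) ≤ m)⟩
  · rintro ⟨h0, hm⟩; exact ⟨n.toNat, by omega, by show ((n.toNat : ℕ) : ℤ) = n; omega⟩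

lemma sum_S (m : ℕ) (f : ℤ → ℝ) :
    ∑ n ∈ S m, f n = ∑ i ∈ Finset.range (m + 1), f i := by
  simp [S, Finset.sum_map]; rfl

/-- Truncations of elements of `ZTrc` satisfy the truncation bound. -/
lemma trunc_mem (hr0 : 0 < r) {a : ℤ → ℤ} (ha : a ∈ ZTrc r c) (m : ℕ) :
    (fun i : Fin (m + 1) => a (i : ℕ)) ∈ ZTrcTrunc r c m := by
  obtain ⟨-, hs, hle⟩ := ha
  have key : ∑ n ∈ S m, |(a n : ℝ)| * r ^ n ≤ c :=
    le_trans (Summable.sum_le_tsum (S m) (fun n _ => by positivity) hs) hle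
  rw [sum_S m (fun n => |(a n : ℝ)| * r ^ n)] at key
  calc ∑ i : Fin (m + 1), |(a (i : ℕ) : ℝ)| * r ^ (i : ℕ)
      = ∑ i ∈ Finset.range (m + 1), |(a i : ℝ)| * r ^ i :=
        Fin.sum_univ_eq_sum_range (fun i => |(a (i : ℕ) : ℝ)| * r ^ i) (m + 1)
    _ = ∑ i ∈ Finset.range (m + 1), |(a i : ℝ)| * r ^ (i : ℤ) := by
        refine Finset.sum_congr rfl fun i _ => ?_
        rw [zpow_natCast]
    _ ≤ c := key

/-- A sequence with bounded partial sums yields an element of `ZTrc`. -/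
lemma mem_of_bounds (hr0 : 0 < r) (hc0 : 0 < c) (b : ℕ → ℤ)
    (hb : ∀ m : ℕ, ∑ i ∈ Finset.range (m + 1), |(b i : ℝ)| * r ^ i ≤ c) :
    (fun n : ℤ => if 0 ≤ n then b n.toNat else 0) ∈ ZTrc r c := by
  set a : ℤ → ℤ := fun n => if 0 ≤ n then b n.toNat else 0 with ha
  set f : ℤ → ℝ := fun n => |(a n : ℝ)| * r ^ n with hf
  have hfnat : ∀ k : ℕ, f (k : ℤ) = |(b k : ℝ)| * r ^ k := by
    intro k
    simp only [hf, ha, Int.natCast_nonneg, if_pos, Int.toNat_natCast, zpow_natCast]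
  have hrange : ∀ n : ℕ, ∑ i ∈ Finset.range n, f i ≤ c := by
    intro n
    cases n with
    | zero => simpa using hc0.le
    | succ m =>
      calc ∑ i ∈ Finset.range (m + 1), f i
          = ∑ i ∈ Finset.range (m + 1), |(b i : ℝ)| * r ^ i :=
            Finset.sum_congr rfl fun i _ => hfnat i
        _ ≤ c := hb m
  have hfneg : ∀ n : ℤ, n < 0 → f n = 0 := by
    intro n hn
    simp only [hf, ha, if_neg (not_le.mpr hn)]
    simp
  have hs1 : Summable fun k : ℕ => f k :=
    summable_of_sum_range_le (fun k => by positivity) hrange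
  have hs2 : Summable fun k : ℕ => f (-k) := by
    apply summable_of_ne_finset_zero (s := {0})
    intro k hk
    simp only [Finset.mem_singleton] at hk
    exact hfneg _ (by omega)
  have hs : Summable f := hs1.of_nat_of_neg hs2
  refine ⟨⟨0, fun n hn => by simp [ha, if_neg (not_le.mpr hn)]⟩, hs, ?_⟩
  refine Summable.tsum_le_of_sum_le hs fun u => ?_
  set m : ℕ := u.sup Int.toNat with hm
  have hsub : u.filter (0 ≤ ·) ⊆ S m := by
    intro n hn
    simp only [Finset.mem_filter] at hn
    rw [mem_S]
    refine ⟨hn.2, ?_⟩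
    have : n.toNat ≤ m := Finset.le_sup (f := Int.toNat) hn.1
    omega
  calc ∑ n ∈ u, f n = ∑ n ∈ u.filter (0 ≤ ·), f n := by
        refine (Finset.sum_filter_of_ne fun n _ h => ?_).symm
        by_contra hn
        exact h (hfneg n (by omega))
    _ ≤ ∑ n ∈ S m, f n :=
        Finset.sum_le_sum_of_subset_of_nonneg hsub fun n _ _ => by positivity
    _ = ∑ i ∈ Finset.range (m + 1), f i := sum_S m f
    _ ≤ c := hrange (m + 1)

end ZTrcAux

open ZTrcAux in
/-- For `0 < r < 1` and `0 < c < 1`, every element of `Z((T))_{r,≤c}` is a power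
series (coefficients vanish in negative degrees), each truncation set is finite, and
`Z((T))_{r,≤c}` with the `T`-adic topology is homeomorphic to the inverse limit of
the finite discrete truncation sets; in particular it is a profinite space. -/
theorem ZTrc_profinite (r c : ℝ) (hr0 : 0 < r) (hr1 : r < 1) (hc0 : 0 < c)
    (hc1 : c < 1) :
    (∀ a ∈ ZTrc r c, ∀ n : ℤ, n < 0 → a n = 0) ∧
    (∀ m : ℕ, (ZTrcTrunc r c m).Finite) ∧
    ∃ e : @Homeomorph (ZTrc r c)
        {x : ∀ m : ℕ, ZTrcTrunc r c m //
          ∀ (m : ℕ) (i : Fin (m + 1)),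
            (x (m + 1) : Fin (m + 2) → ℤ) i.castSucc = (x m : Fin (m + 1) → ℤ) i}
        (tadicTopology r c) inferInstance,
      ∀ (a : ZTrc r c) (m : ℕ) (i : Fin (m + 1)),
        ((e a : ∀ m : ℕ, ZTrcTrunc r c m) m : Fin (m + 1) → ℤ) i
          = (a : ℤ → ℤ) ((i : ℕ) : ℤ) := by
  refine ⟨fun a ha n hn => neg_zero hr0 hr1 hc1 ha hn, ?_, ?_⟩
  · -- finiteness of truncation sets
    intro m
    set M : ℤ := ⌈c / r ^ m⌉ with hM
    have : ZTrcTrunc r c m ⊆ Set.pi Set.univ fun _ : Fin (m + 1) => Set.Icc (-M) M := by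
      intro v hv i _
      have hterm : |(v i : ℝ)| * r ^ (i : ℕ) ≤ c := by
        refine le_trans (Finset.single_le_sum (f := fun j : Fin (m + 1) =>
          |(v j : ℝ)| * r ^ (j : ℕ)) (fun j _ => by positivity) (Finset.mem_univ i)) hv
      have hrm : r ^ m ≤ r ^ (i : ℕ) :=
        pow_le_pow_of_le_one hr0.le hr1.le (Nat.lt_succ_iff.mp i.2)
      have hrm0 : (0 : ℝ) < r ^ m := by positivity
      have h1 : |(v i : ℝ)| ≤ c / r ^ m := by
        rw [le_div_iff₀ hrm0]
        nlinarith [abs_nonneg ((v i : ℝ))]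
      have h2 : |(v i : ℝ)| ≤ (M : ℝ) := h1.trans (Int.le_ceil _)
      have h3 : |v i| ≤ M := by rw [← Int.cast_abs] at h2; exact_mod_cast h2
      simpa only [Set.mem_Icc] using abs_le.mp h3
    exact Set.Finite.subset (Set.Finite.pi fun i => Set.finite_Icc _ _) this
  · -- the homeomorphism
    set Lim := {x : ∀ m : ℕ, ZTrcTrunc r c m //
      ∀ (m : ℕ) (i : Fin (m + 1)),
        (x (m + 1) : Fin (m + 2) → ℤ) i.castSucc = (x m : Fin (m + 1) → ℤ) i} with hLim
    -- forward map
    set F : ZTrc r c → Lim := fun a =>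
      ⟨fun m => ⟨fun i => a.1 (i : ℕ), trunc_mem hr0 a.2 m⟩,
        fun m i => by simp⟩ with hF
    -- backward map ingredients
    set bk : Lim → ℕ → ℤ := fun x k => (x.1 k : Fin (k + 1) → ℤ) (Fin.last k) with hbk
    have bk_eq : ∀ (x : Lim) (m : ℕ) (i : Fin (m + 1)),
        (x.1 m : Fin (m + 1) → ℤ) i = bk x (i : ℕ) := by
      intro x m
      induction m with
      | zero =>
        intro i
        have hi : i = Fin.last 0 := Fin.ext (by have := i.2; simp only [Fin.val_last]; omega)
        rw [hi]
        rfl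
      | succ m ih =>
        intro i
        rcases Fin.eq_castSucc_or_eq_last i with ⟨j, rfl⟩ | rfl
        · rw [x.2 m j, ih j]; rfl
        · rfl
    have hGmem : ∀ x : Lim,
        (fun n : ℤ => if 0 ≤ n then bk x n.toNat else 0) ∈ ZTrc r c := by
      intro x
      refine mem_of_bounds hr0 hc0 (bk x) fun m => ?_
      have := (x.1 m).2
      simp only [ZTrcTrunc, Set.mem_setOf_eq] at this
      calc ∑ i ∈ Finset.range (m + 1), |(bk x i : ℝ)| * r ^ i
          = ∑ i : Fin (m + 1), |(bk x (i : ℕ) : ℝ)| * r ^ (i : ℕ) :=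
            (Fin.sum_univ_eq_sum_range (fun i => |(bk x i : ℝ)| * r ^ i) (m + 1)).symm
        _ = ∑ i : Fin (m + 1), |(((x.1 m : Fin (m + 1) → ℤ) i : ℤ) : ℝ)| * r ^ (i : ℕ) := by
            refine Finset.sum_congr rfl fun i _ => ?_
            rw [bk_eq x m i]
        _ ≤ c := this
    set G : Lim → ZTrc r c := fun x =>
      ⟨fun n => if 0 ≤ n then bk x n.toNat else 0, hGmem x⟩ with hG
    -- G ∘ F = id
    have hGF : ∀ a, G (F a) = a := by
      intro a
      apply Subtype.ext
      funext n
      simp only [hG, hF]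
      by_cases hn : 0 ≤ n
      · simp only [if_pos hn, hbk]
        show a.1 (((Fin.last n.toNat : Fin (n.toNat + 1)) : ℕ) : ℤ) = a.1 n
        rw [Fin.val_last, Int.toNat_of_nonneg hn]
      · rw [if_neg hn]
        exact (neg_zero hr0 hr1 hc1 a.2 (by omega)).symm
    -- F ∘ G = id
    have hFG : ∀ x, F (G x) = x := by
      intro x
      apply Subtype.ext
      funext m
      apply Subtype.ext
      funext i
      show (if 0 ≤ ((i : ℕ) : ℤ) then bk x ((i : ℕ) : ℤ).toNat else 0)
        = (x.1 m : Fin (m + 1) → ℤ) i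
      rw [if_pos (Int.natCast_nonneg _), Int.toNat_natCast, bk_eq x m i]
    -- the equivalence
    letI tZ : TopologicalSpace (ZTrc r c) := tadicTopology r c
    have hGcoeff : ∀ (x : Lim) (n : ℤ), n < 0 → (G x).1 n = 0 := by
      intro x n hn
      simp only [hG]
      rw [if_neg (by omega)]
    -- continuity of F
    have hFcont : Continuous F := by
      apply Continuous.subtype_mk
      apply continuous_pi
      intro m
      rw [continuous_discrete_rng]
      intro v
      by_cases hne : ∃ a : ZTrc r c, (⟨fun i => a.1 (i : ℕ), trunc_mem hr0 a.2 m⟩ :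
          ZTrcTrunc r c m) = v
      · obtain ⟨f, hfv⟩ := hne
        have : (fun a : ZTrc r c => ((F a).1 m : ZTrcTrunc r c m)) ⁻¹' {v}
            = {g : ZTrc r c | ∀ n ≤ (m : ℤ), (g : ℤ → ℤ) n = (f : ℤ → ℤ) n} := by
          ext a
          simp only [Set.mem_preimage, Set.mem_singleton_iff, Set.mem_setOf_eq, hF]
          constructor
          · intro h n hn
            by_cases h0 : 0 ≤ n
            · have hlt : n.toNat < m + 1 := by omega
              have := congrArg (fun w : ZTrcTrunc r c m =>
                (w : Fin (m + 1) → ℤ) ⟨n.toNat, hlt⟩) (h.trans hfv.symm)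
              simpa [Int.toNat_of_nonneg h0] using this
            · rw [neg_zero hr0 hr1 hc1 a.2 (by omega),
                neg_zero hr0 hr1 hc1 f.2 (by omega)]
          · intro h
            rw [← hfv]
            apply Subtype.ext
            funext i
            exact h ((i : ℕ) : ℤ) (by exact_mod_cast Nat.lt_succ_iff.mp i.2)
        rw [this]
        exact TopologicalSpace.isOpen_generateFrom_of_mem ⟨f, (m : ℤ), rfl⟩
      · have : (fun a : ZTrc r c => ((F a).1 m : ZTrcTrunc r c m)) ⁻¹' {v} = ∅ := by
          ext a
          simp only [Set.mem_preimage, Set.mem_singleton_iff, Set.mem_empty_iff_false,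
            iff_false]
          intro h
          exact hne ⟨a, h⟩
        rw [this]
        exact isOpen_empty
    -- continuity of G
    have hGcont : Continuous G := by
      refine continuous_generateFrom_iff.mpr ?_
      rintro U ⟨f, N, rfl⟩
      by_cases hN : N < 0
      · have : G ⁻¹' {g : ZTrc r c | ∀ n ≤ N, (g : ℤ → ℤ) n = (f : ℤ → ℤ) n}
            = Set.univ := by
          ext x
          simp only [Set.mem_preimage, Set.mem_setOf_eq, Set.mem_univ, iff_true]
          intro n hn
          show (if 0 ≤ n then bk x n.toNat else 0) = f.1 n
          rw [if_neg (by omega)]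
          exact (neg_zero hr0 hr1 hc1 f.2 (by omega)).symm
        rw [this]; exact isOpen_univ
      · push_neg at hN
        set m : ℕ := N.toNat with hm
        have : G ⁻¹' {g : ZTrc r c | ∀ n ≤ N, (g : ℤ → ℤ) n = (f : ℤ → ℤ) n}
            = (fun x : Lim => (x.1 m : ZTrcTrunc r c m)) ⁻¹'
              {⟨fun i => f.1 (i : ℕ), trunc_mem hr0 f.2 m⟩} := by
          ext x
          simp only [Set.mem_preimage, Set.mem_singleton_iff, Set.mem_setOf_eq]
          constructor
          · intro h
            apply Subtype.ext
            funext i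
            have hi : ((i : ℕ) : ℤ) ≤ N := by
              have := Nat.lt_succ_iff.mp i.2
              omega
            have := h ((i : ℕ) : ℤ) hi
            simp only [hG, if_pos (Int.natCast_nonneg _), Int.toNat_natCast] at this
            rw [bk_eq x m i]
            exact this
          · intro h n hn
            by_cases h0 : 0 ≤ n
            · have hlt : n.toNat < m + 1 := by omega
              have hx := congrArg (fun w : ZTrcTrunc r c m =>
                (w : Fin (m + 1) → ℤ) ⟨n.toNat, hlt⟩) h
              simp only at hx
              rw [bk_eq x m ⟨n.toNat, hlt⟩] at hx
              show (if 0 ≤ n then bk x n.toNat else 0) = f.1 n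
              rw [if_pos h0, hx]
              simp [Int.toNat_of_nonneg h0]
            · show (if 0 ≤ n then bk x n.toNat else 0) = f.1 n
              rw [if_neg (by omega)]
              exact (neg_zero hr0 hr1 hc1 f.2 (by omega)).symm
        rw [this]
        exact ((continuous_apply m).comp continuous_subtype_val).isOpen_preimage _
          (isOpen_discrete _)
    refine ⟨⟨⟨F, G, hGF, hFG⟩, hFcont, hGcont⟩, fun a m i => rfl⟩
end

section
/- Let 0 < r' < r < 1, c > 0, and fix δ ∈ (0,1). The evaluation map F : Z((T))_{r,≤c} → ℝ, Σ a_n T^n ↦ Σ a_n (r')^n, is well-defined (the series converges absolutely) and continuous with respect to the T-adic topology on the domain. Quantitatively, if f and g agree in all coefficients of index ≤ N, then |F(f) − F(g)| ≤ 2c (r'/r)^N / (1 − r'/r). -/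
/-- Evaluation of a Laurent series at `r'`. -/
noncomputable def theta (r' : ℝ) (a : ℤ → ℤ) : ℝ := ∑' n : ℤ, (a n : ℝ) * r' ^ n

private lemma summable_aux {r r' : ℝ} (h0 : 0 < r') (h1 : r' < r)
    {a : ℤ → ℤ} {N₀ : ℤ} (hN₀ : ∀ n < N₀, a n = 0)
    (hs : Summable (fun n : ℤ => |(a n : ℝ)| * r ^ n)) :
    Summable (fun n : ℤ => |(a n : ℝ)| * r' ^ n) := by
  have hr : (0:ℝ) < r := h0.trans h1
  have hq0 : 0 < r'/r := div_pos h0 hr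
  have hq1 : r'/r < 1 := (div_lt_one hr).2 h1
  refine Summable.of_nonneg_of_le (fun n => by positivity)
    (f := fun n => (r'/r) ^ N₀ * (|(a n : ℝ)| * r ^ n)) (fun n => ?_) (hs.mul_left _)
  rcases lt_or_ge n N₀ with h | h
  · rw [hN₀ n h]; simp
  · have he : r' ^ n = (r'/r) ^ n * r ^ n := by
      rw [div_zpow, div_mul_cancel₀]
      exact zpow_ne_zero n hr.ne'
    rw [he]
    have hle : (r'/r) ^ n ≤ (r'/r) ^ N₀ := zpow_le_zpow_right_of_le_one₀ hq0 hq1.le h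
    calc |(a n:ℝ)| * ((r'/r)^n * r^n) = (r'/r)^n * (|(a n:ℝ)| * r^n) := by ring
      _ ≤ (r'/r)^N₀ * (|(a n:ℝ)| * r^n) :=
          mul_le_mul_of_nonneg_right hle (by positivity)

private lemma key_bound {r r' c : ℝ} (h0 : 0 < r') (h1 : r' < r) (hc : 0 < c)
    (F G : ℤ → ℤ) (hF : F ∈ ZTrc r c) (hG : G ∈ ZTrc r c)
    (N : ℤ) (hfg : ∀ n ≤ N, F n = G n) :
    |theta r' F - theta r' G| ≤ 2 * c * (r'/r) ^ N := by
  have hr : (0:ℝ) < r := h0.trans h1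
  have hq0 : 0 < r'/r := div_pos h0 hr
  have hq1 : r'/r < 1 := (div_lt_one hr).2 h1
  obtain ⟨⟨Nf, hNf⟩, hfs, hfc⟩ := hF
  obtain ⟨⟨Ng, hNg⟩, hgs, hgc⟩ := hG
  have hfs' : Summable (fun n : ℤ => |(F n : ℝ)| * r' ^ n) := summable_aux h0 h1 hNf hfs
  have hgs' : Summable (fun n : ℤ => |(G n : ℝ)| * r' ^ n) := summable_aux h0 h1 hNg hgs
  have habs : ∀ (a : ℤ → ℤ), (fun n : ℤ => |(a n : ℝ) * r' ^ n|)
      = fun n : ℤ => |(a n:ℝ)| * r' ^ n := by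
    intro a; funext n; rw [abs_mul, abs_of_pos (zpow_pos h0 n)]
  have hfa : Summable (fun n : ℤ => (F n : ℝ) * r' ^ n) :=
    Summable.of_abs (by rw [habs]; exact hfs')
  have hga : Summable (fun n : ℤ => (G n : ℝ) * r' ^ n) :=
    Summable.of_abs (by rw [habs]; exact hgs')
  have hsub : theta r' F - theta r' G
      = ∑' n : ℤ, (((F n : ℝ) - (G n : ℝ)) * r' ^ n) := by
    rw [theta, theta, ← Summable.tsum_sub hfa hga]
    congr 1; funext n; ring
  have hterm : ∀ n : ℤ, |((F n : ℝ) - (G n : ℝ)) * r' ^ n|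
      ≤ (r'/r) ^ N * ((|(F n : ℝ)| + |(G n : ℝ)|) * r ^ n) := by
    intro n
    rcases le_or_gt n N with h | h
    · rw [hfg n h]; simp; positivity
    · have he : r' ^ n = (r'/r) ^ n * r ^ n := by
        rw [div_zpow, div_mul_cancel₀]
        exact zpow_ne_zero n hr.ne'
      rw [abs_mul, abs_of_pos (zpow_pos h0 n), he]
      have hle : (r'/r) ^ n ≤ (r'/r) ^ N := zpow_le_zpow_right_of_le_one₀ hq0 hq1.le h.le
      have htri : |(F n : ℝ) - (G n : ℝ)| ≤ |(F n : ℝ)| + |(G n : ℝ)| := by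
        have := abs_add_le (F n : ℝ) (-(G n : ℝ))
        simpa [sub_eq_add_neg] using this
      calc |(F n : ℝ) - (G n : ℝ)| * ((r'/r)^n * r^n)
          ≤ (|(F n : ℝ)| + |(G n : ℝ)|) * ((r'/r)^n * r^n) :=
            mul_le_mul_of_nonneg_right htri (by positivity)
        _ = (r'/r)^n * ((|(F n : ℝ)| + |(G n : ℝ)|) * r^n) := by ring
        _ ≤ (r'/r)^N * ((|(F n : ℝ)| + |(G n : ℝ)|) * r^n) :=
            mul_le_mul_of_nonneg_right hle (by positivity)
  have hbig : Summable (fun n : ℤ => (r'/r) ^ N * ((|(F n : ℝ)| + |(G n : ℝ)|) * r ^ n)) := by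
    refine Summable.mul_left _ ?_
    have := hfs.add hgs
    exact this.congr (fun n => by ring)
  have hdabs : Summable (fun n : ℤ => |((F n : ℝ) - (G n : ℝ)) * r' ^ n|) :=
    Summable.of_nonneg_of_le (fun n => abs_nonneg _) hterm hbig
  rw [hsub]
  have h1' : |∑' n : ℤ, (((F n : ℝ) - (G n : ℝ)) * r' ^ n)|
      ≤ ∑' n : ℤ, |((F n : ℝ) - (G n : ℝ)) * r' ^ n| := by
    have := norm_tsum_le_tsum_norm (f := fun n : ℤ => ((F n : ℝ) - (G n : ℝ)) * r' ^ n)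
      (by simpa only [Real.norm_eq_abs] using hdabs)
    simpa only [Real.norm_eq_abs] using this
  refine h1'.trans ?_
  calc ∑' n : ℤ, |((F n : ℝ) - (G n : ℝ)) * r' ^ n|
      ≤ ∑' n : ℤ, (r'/r) ^ N * ((|(F n : ℝ)| + |(G n : ℝ)|) * r ^ n) :=
        Summable.tsum_le_tsum hterm hdabs hbig
    _ = (r'/r) ^ N * ∑' n : ℤ, ((|(F n : ℝ)| + |(G n : ℝ)|) * r ^ n) := tsum_mul_left
    _ = (r'/r) ^ N * ((∑' n : ℤ, |(F n : ℝ)| * r ^ n) + ∑' n : ℤ, |(G n : ℝ)| * r ^ n) := by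
        rw [← Summable.tsum_add hfs hgs]; exact congrArg _ (tsum_congr fun n => by ring)
    _ ≤ (r'/r) ^ N * (c + c) :=
        mul_le_mul_of_nonneg_left (add_le_add hfc hgc) (by positivity)
    _ = 2 * c * (r'/r) ^ N := by ring

/-- For `0 < r' < r < 1` the evaluation map `θ : Z((T))_{r,≤c} → ℝ`,
`∑ aₙ Tⁿ ↦ ∑ aₙ (r')ⁿ`, is well defined (the series converges absolutely) and
continuous for the `T`-adic topology; quantitatively, if `f` and `g` agree in all
coefficients of index `≤ N` then `|θ f − θ g| ≤ 2c (r'/r)^N / (1 − r'/r)`. -/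
theorem theta_welldefined_continuous (r r' c δ : ℝ) (h0 : 0 < r') (h1 : r' < r)
    (h2 : r < 1) (hc : 0 < c) (hδ0 : 0 < δ) (hδ1 : δ < 1) :
    (∀ a ∈ ZTrc r c, Summable (fun n : ℤ => |(a n : ℝ)| * r' ^ n)) ∧
    @Continuous (ZTrc r c) ℝ (tadicTopology r c) _ (fun a => theta r' (a : ℤ → ℤ)) ∧
    (∀ f g : ZTrc r c, ∀ N : ℤ, (∀ n ≤ N, (f : ℤ → ℤ) n = (g : ℤ → ℤ) n) →
      |theta r' (f : ℤ → ℤ) - theta r' (g : ℤ → ℤ)|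
        ≤ 2 * c * (r' / r) ^ N / (1 - r' / r)) := by
  have hr : (0:ℝ) < r := h0.trans h1
  have hq0 : 0 < r'/r := div_pos h0 hr
  have hq1 : r'/r < 1 := (div_lt_one hr).2 h1
  have hd0 : 0 < 1 - r'/r := by linarith
  have final : ∀ f g : ZTrc r c, ∀ N : ℤ, (∀ n ≤ N, (f : ℤ → ℤ) n = (g : ℤ → ℤ) n) →
      |theta r' (f : ℤ → ℤ) - theta r' (g : ℤ → ℤ)|
        ≤ 2 * c * (r' / r) ^ N / (1 - r' / r) := by
    intro f g N hfg
    refine (key_bound h0 h1 hc f g f.2 g.2 N hfg).trans ?_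
    rw [le_div_iff₀ hd0]
    exact mul_le_of_le_one_right (by positivity) (by linarith)
  refine ⟨?_, ?_, final⟩
  · rintro a ⟨⟨N₀, hN₀⟩, hs, -⟩
    exact summable_aux h0 h1 hN₀ hs
  · letI := tadicTopology r c
    rw [continuous_def]
    intro s hs
    rw [isOpen_iff_forall_mem_open]
    intro f hf
    obtain ⟨ε, hε, hball⟩ := Metric.isOpen_iff.1 hs _ hf
    have hK : 0 < 2 * c / (1 - r'/r) := by positivity
    obtain ⟨n, hn⟩ := exists_pow_lt_of_lt_one (div_pos hε hK) hq1
    refine ⟨{g : ZTrc r c | ∀ m ≤ (n : ℤ), (g : ℤ → ℤ) m = (f : ℤ → ℤ) m}, ?_, ?_, ?_⟩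
    · intro g hg
      apply hball
      rw [Metric.mem_ball, Real.dist_eq]
      refine lt_of_le_of_lt (final g f n (fun m hm => hg m hm)) ?_
      have hz : (r'/r : ℝ) ^ (n : ℤ) = (r'/r) ^ n := zpow_natCast _ _
      rw [hz]
      calc 2 * c * (r'/r) ^ n / (1 - r'/r) = (r'/r) ^ n * (2 * c / (1 - r'/r)) := by ring
        _ < ε / (2 * c / (1 - r'/r)) * (2 * c / (1 - r'/r)) :=
            mul_lt_mul_of_pos_right hn hK
        _ = ε := div_mul_cancel₀ _ hK.ne'
    · exact TopologicalSpace.isOpen_generateFrom_of_mem ⟨f, n, rfl⟩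
    · intro m _; rfl
end

section
/- Let 0 < r' < r < 1 and let K ⊆ ℝ be compact. Then there exists c > 0 such that every x ∈ K can be written as x = Σ_{n≫−∞} a_n (r')^n with a_n ∈ ℤ, |a_n| < 1 + 1/r' for all n, and Σ |a_n| r^n ≤ c. In particular K is contained in the image of the evaluation map θ_{r'} : Z((T))_{r,≤c} → ℝ. -/
noncomputable def remSeq (r' x : ℝ) (N : ℤ) : ℕ → ℝ
  | 0 => x
  | j + 1 => remSeq r' x N j
      - ⌊remSeq r' x N j / r' ^ (N + (j : ℤ))⌋ * r' ^ (N + (j : ℤ))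

noncomputable def digSeq (r' x : ℝ) (N : ℤ) (j : ℕ) : ℤ :=
  ⌊remSeq r' x N j / r' ^ (N + (j : ℤ))⌋

lemma remSeq_succ_eq (r' x : ℝ) (N : ℤ) (j : ℕ) (h0 : 0 < r') :
    remSeq r' x N (j + 1)
      = r' ^ (N + (j : ℤ)) * Int.fract (remSeq r' x N j / r' ^ (N + (j : ℤ))) := by
  have hp : (0:ℝ) < r' ^ (N + (j : ℤ)) := zpow_pos h0 _
  rw [Int.fract]
  simp only [remSeq]
  field_simp

lemma remSeq_succ_nonneg (r' x : ℝ) (N : ℤ) (j : ℕ) (h0 : 0 < r') :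
    0 ≤ remSeq r' x N (j + 1) := by
  rw [remSeq_succ_eq r' x N j h0]
  exact mul_nonneg (zpow_pos h0 _).le (Int.fract_nonneg _)

lemma remSeq_succ_lt (r' x : ℝ) (N : ℤ) (j : ℕ) (h0 : 0 < r') :
    remSeq r' x N (j + 1) < r' ^ (N + (j : ℤ)) := by
  rw [remSeq_succ_eq r' x N j h0]
  calc r' ^ (N + (j : ℤ)) * Int.fract (remSeq r' x N j / r' ^ (N + (j : ℤ)))
      < r' ^ (N + (j : ℤ)) * 1 :=
        (mul_lt_mul_iff_right₀ (zpow_pos h0 _)).2 (Int.fract_lt_one _)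
    _ = r' ^ (N + (j : ℤ)) := mul_one _

lemma remSeq_telescope (r' x : ℝ) (N : ℤ) (j : ℕ) :
    x - ∑ i ∈ Finset.range j, (digSeq r' x N i : ℝ) * r' ^ (N + (i : ℤ))
      = remSeq r' x N j := by
  induction j with
  | zero => simp [remSeq]
  | succ k ih =>
      rw [Finset.sum_range_succ]
      have : remSeq r' x N (k + 1)
          = remSeq r' x N k - (digSeq r' x N k : ℝ) * r' ^ (N + (k : ℤ)) := rfl
      rw [this, ← ih]
      ring

lemma digSeq_succ_nonneg (r' x : ℝ) (N : ℤ) (j : ℕ) (h0 : 0 < r') :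
    0 ≤ digSeq r' x N (j + 1) :=
  Int.floor_nonneg.2 (div_nonneg (remSeq_succ_nonneg r' x N j h0) (zpow_pos h0 _).le)

lemma digSeq_succ_lt (r' x : ℝ) (N : ℤ) (j : ℕ) (h0 : 0 < r') :
    (digSeq r' x N (j + 1) : ℝ) < 1 / r' := by
  have hp : (0:ℝ) < r' ^ (N + ((j:ℕ) + 1 : ℤ)) := zpow_pos h0 _
  have h1 : remSeq r' x N (j + 1) / r' ^ (N + ((j:ℕ) + 1 : ℤ)) < 1 / r' := by
    rw [div_lt_div_iff₀ hp h0]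
    have := remSeq_succ_lt r' x N j h0
    calc remSeq r' x N (j + 1) * r' < r' ^ (N + (j : ℤ)) * r' := by
          exact mul_lt_mul_of_pos_right this h0
      _ = 1 * r' ^ (N + ((j:ℕ) + 1 : ℤ)) := by
          rw [one_mul, show (N + ((j:ℕ) + 1 : ℤ)) = (N + (j:ℤ)) + 1 by ring,
            zpow_add_one₀ (ne_of_gt h0)]
  calc (digSeq r' x N (j + 1) : ℝ)
      ≤ remSeq r' x N (j + 1) / r' ^ (N + ((j:ℕ)+1 : ℤ)) := by
        have := Int.floor_le (remSeq r' x N (j + 1) / r' ^ (N + ((j:ℕ)+1 : ℤ)))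
        simpa [digSeq] using this
    _ < 1 / r' := h1

/-- Every compact set `K ⊆ ℝ` is contained in the image of `Z((T))_{r,≤c}` under the
evaluation map `θ_{r'} : ∑ aₙ Tⁿ ↦ ∑ aₙ (r')ⁿ` for some `c > 0`: every `x ∈ K` admits
an expansion `x = ∑_{n≫−∞} aₙ (r')ⁿ` with integer coefficients satisfying
`|aₙ| < 1 + 1/r'` and `∑ |aₙ| rⁿ ≤ c`. -/
theorem compact_subset_image_theta (r r' : ℝ) (h0 : 0 < r') (h1 : r' < r) (h2 : r < 1)
    (K : Set ℝ) (hK : IsCompact K) :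
    ∃ c > 0, ∀ x ∈ K, ∃ a : ℤ → ℤ,
      (∃ N : ℤ, ∀ n < N, a n = 0) ∧
      (∀ n : ℤ, |(a n : ℝ)| < 1 + 1 / r') ∧
      Summable (fun n : ℤ => |(a n : ℝ)| * r ^ n) ∧
      (∑' n : ℤ, |(a n : ℝ)| * r ^ n ≤ c) ∧
      HasSum (fun n : ℤ => (a n : ℝ) * r' ^ n) x := by
  have hr0 : 0 < r := h0.trans h1
  have hr'1 : r' < 1 := h1.trans h2
  -- bound the compact set
  obtain ⟨M0, hM0⟩ : ∃ M, ∀ x ∈ K, |x| ≤ M := by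
    obtain ⟨M, hM⟩ := hK.isBounded.exists_norm_le
    exact ⟨M, fun x hx => hM x hx⟩
  set M : ℝ := max M0 1 with hMdef
  have hM1 : 0 < M := lt_of_lt_of_le one_pos (le_max_right _ _)
  have hMK : ∀ x ∈ K, |x| ≤ M := fun x hx => (hM0 x hx).trans (le_max_left _ _)
  -- choose the starting index N
  have hinv : 1 < 1 / r' := one_lt_one_div h0 hr'1
  obtain ⟨k, hk⟩ := pow_unbounded_of_one_lt M hinv
  set N : ℤ := 1 - (k : ℤ) with hNdef
  have hMN : M < r' ^ (N - 1) := by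
    have : r' ^ (N - 1) = (1 / r') ^ k := by
      rw [show N - 1 = -(k : ℤ) by omega, zpow_neg, zpow_natCast, one_div, inv_pow]
    rw [this]; exact hk
  set c : ℝ := (1 + 1 / r') * r ^ N / (1 - r) with hcdef
  have hone : (0:ℝ) < 1 + 1 / r' := by positivity
  have hc : 0 < c := by
    apply div_pos (mul_pos hone (zpow_pos hr0 _)); linarith
  refine ⟨c, hc, fun x hx => ?_⟩
  -- uniform digit bound
  have hdig : ∀ j : ℕ, |(digSeq r' x N j : ℝ)| < 1 + 1 / r' := by
    intro j
    cases j with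
    | zero =>
        have hp : (0:ℝ) < r' ^ (N + (0:ℕ) : ℤ) := zpow_pos h0 _
        have hxM : |x| ≤ M := hMK x hx
        have hq : r' ^ (N - 1) / r' ^ (N + ((0:ℕ):ℤ)) = 1 / r' := by
          rw [show N + ((0:ℕ):ℤ) = N by simp, ← zpow_sub₀ (ne_of_gt h0),
            show N - 1 - N = -1 by ring, zpow_neg_one, one_div]
        have habs : |x / r' ^ (N + ((0:ℕ):ℤ))| < 1 / r' := by
          rw [abs_div, abs_of_pos hp, ← hq]
          have hlt : |x| < r' ^ (N - 1) := lt_of_le_of_lt hxM hMN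
          gcongr
        rw [abs_lt] at habs ⊢
        have hfl := Int.floor_le (x / r' ^ (N + ((0:ℕ):ℤ)))
        have hfl2 := Int.lt_floor_add_one (x / r' ^ (N + ((0:ℕ):ℤ)))
        have : digSeq r' x N 0 = ⌊x / r' ^ (N + ((0:ℕ):ℤ))⌋ := rfl
        rw [this]
        constructor <;> [skip; skip] <;> push_cast <;> nlinarith [habs.1, habs.2]
    | succ j =>
        have h1' := digSeq_succ_nonneg r' x N j h0
        have h2' := digSeq_succ_lt r' x N j h0
        rw [abs_of_nonneg (by exact_mod_cast h1')]
        linarith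
  -- the coefficient sequence
  set a : ℤ → ℤ := fun n => if N ≤ n then digSeq r' x N (n - N).toNat else 0 with hadef
  have ha0 : ∀ n < N, a n = 0 := fun n hn => if_neg (not_le.2 hn)
  have habound : ∀ n : ℤ, |(a n : ℝ)| < 1 + 1 / r' := by
    intro n
    by_cases h : N ≤ n
    · rw [hadef]; simp only [if_pos h]; exact hdig _
    · rw [hadef]; simp only [if_neg h]; simpa using hone
  -- the embedding ℕ → ℤ
  set e : ℕ → ℤ := fun j => N + j with hedef
  have he : Function.Injective e := fun i j h => by simp only [hedef] at h; omega
  have hrange : ∀ n : ℤ, n ∉ Set.range e → ¬ N ≤ n := by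
    intro n hn hNn
    exact hn ⟨(n - N).toNat, by simp only [hedef]; omega⟩
  have hae : ∀ j : ℕ, a (e j) = digSeq r' x N j := by
    intro j
    rw [hadef, hedef]
    simp only [if_pos (by omega : N ≤ N + (j:ℤ))]
    congr 1
    omega
  -- zpow splitting
  have hsplit : ∀ (t : ℝ), 0 < t → ∀ j : ℕ, t ^ (N + (j : ℤ)) = t ^ N * t ^ j := by
    intro t ht j
    rw [zpow_add₀ (ne_of_gt ht), zpow_natCast]
  -- summability over ℕ of the r-series
  have hmaj : Summable (fun j : ℕ => (1 + 1 / r') * r ^ N * r ^ j) :=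
    (summable_geometric_of_lt_one hr0.le h2).mul_left _
  have hgle : ∀ j : ℕ, |(digSeq r' x N j : ℝ)| * r ^ (N + (j : ℤ))
      ≤ (1 + 1 / r') * r ^ N * r ^ j := by
    intro j
    rw [hsplit r hr0 j, ← mul_assoc]
    apply mul_le_mul_of_nonneg_right _ (pow_nonneg hr0.le j)
    exact mul_le_mul_of_nonneg_right (hdig j).le (zpow_pos hr0 _).le
  have hgsum : Summable (fun j : ℕ => |(digSeq r' x N j : ℝ)| * r ^ (N + (j : ℤ))) :=
    Summable.of_nonneg_of_le (fun j => mul_nonneg (abs_nonneg _) (zpow_pos hr0 _).le)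
      hgle hmaj
  -- summability over ℕ of the r'-series and HasSum to x
  have hfabs : ∀ j : ℕ, |(digSeq r' x N j : ℝ) * r' ^ (N + (j : ℤ))|
      ≤ (1 + 1 / r') * r' ^ N * r' ^ j := by
    intro j
    rw [abs_mul, abs_of_pos (zpow_pos h0 _), hsplit r' h0 j, ← mul_assoc]
    apply mul_le_mul_of_nonneg_right _ (pow_nonneg h0.le j)
    exact mul_le_mul_of_nonneg_right (hdig j).le (zpow_pos h0 _).le
  have hfsum : Summable (fun j : ℕ => (digSeq r' x N j : ℝ) * r' ^ (N + (j : ℤ))) := by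
    apply Summable.of_abs
    exact Summable.of_nonneg_of_le (fun j => abs_nonneg _) hfabs
      ((summable_geometric_of_lt_one h0.le hr'1).mul_left _)
  have hrem : Filter.Tendsto (fun j : ℕ => remSeq r' x N j) Filter.atTop (nhds 0) := by
    rw [← Filter.tendsto_add_atTop_iff_nat 1]
    apply squeeze_zero (fun j => remSeq_succ_nonneg r' x N j h0)
      (fun j => (remSeq_succ_lt r' x N j h0).le)
    have : Filter.Tendsto (fun j : ℕ => r' ^ N * r' ^ j) Filter.atTop (nhds (r' ^ N * 0)) :=
      (tendsto_pow_atTop_nhds_zero_of_lt_one h0.le hr'1).const_mul _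
    rw [mul_zero] at this
    exact this.congr (fun j => (hsplit r' h0 j).symm)
  have hhasN : HasSum (fun j : ℕ => (digSeq r' x N j : ℝ) * r' ^ (N + (j : ℤ))) x := by
    rw [hfsum.hasSum_iff_tendsto_nat]
    have := (tendsto_const_nhds (x := x) (f := Filter.atTop (α := ℕ))).sub hrem
    rw [sub_zero] at this
    exact this.congr (fun n => by rw [← remSeq_telescope r' x N n]; ring)
  -- transfer to ℤ
  have hf0 : ∀ n ∉ Set.range e, (a n : ℝ) * r' ^ n = 0 := by
    intro n hn
    rw [hadef]; simp [if_neg (hrange n hn)]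
  have hg0 : ∀ n ∉ Set.range e, |(a n : ℝ)| * r ^ n = 0 := by
    intro n hn
    rw [hadef]; simp [if_neg (hrange n hn)]
  have hhasZ : HasSum (fun n : ℤ => (a n : ℝ) * r' ^ n) x := by
    rw [← he.hasSum_iff hf0]
    have heq : ((fun n : ℤ => (a n : ℝ) * r' ^ n) ∘ e)
        = fun j : ℕ => (digSeq r' x N j : ℝ) * r' ^ (N + (j : ℤ)) := by
      funext j
      simp only [Function.comp_apply, hae j]
      rfl
    rw [heq]
    exact hhasN
  have hgeq : ((fun n : ℤ => |(a n : ℝ)| * r ^ n) ∘ e)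
      = fun j : ℕ => |(digSeq r' x N j : ℝ)| * r ^ (N + (j : ℤ)) := by
    funext j
    simp only [Function.comp_apply, hae j]
    rfl
  have hsumZ : Summable (fun n : ℤ => |(a n : ℝ)| * r ^ n) := by
    rw [← he.summable_iff hg0, hgeq]
    exact hgsum
  have hsupp : Function.support (fun n : ℤ => |(a n : ℝ)| * r ^ n) ⊆ Set.range e := by
    intro n hn
    by_contra h
    exact hn (hg0 n h)
  have htsum : ∑' n : ℤ, |(a n : ℝ)| * r ^ n ≤ c := by
    have hte : ∑' n : ℤ, |(a n : ℝ)| * r ^ n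
        = ∑' j : ℕ, |(digSeq r' x N j : ℝ)| * r ^ (N + (j : ℤ)) := by
      rw [← he.tsum_eq hsupp]
      exact tsum_congr (fun j => congrFun hgeq j)
    rw [hte]
    calc (∑' j : ℕ, |(digSeq r' x N j : ℝ)| * r ^ (N + (j : ℤ)))
        ≤ ∑' j : ℕ, (1 + 1 / r') * r ^ N * r ^ j := Summable.tsum_le_tsum hgle hgsum hmaj
      _ = (1 + 1 / r') * r ^ N * (1 - r)⁻¹ := by
          rw [tsum_mul_left, tsum_geometric_of_lt_one hr0.le h2]
      _ = c := by rw [hcdef]; ring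
  exact ⟨a, ⟨N, ha0⟩, habound, hsumZ, htsum, hhasZ⟩
end

section
/- Every nonzero real number x can be expanded as x = Σ_{n ≥ N} a_n (r')^n for some N ∈ ℤ and integers a_n with |a_n| < 1 + 1/r', where 0 < r' < 1 is fixed; moreover N can be chosen so that (r')^N ≤ |x|, and the construction is by a greedy algorithm: choose n minimal with (r')^n ≤ |x|, pick a_n ∈ ℤ with |x/(r')^n − a_n| < 1, replace x by x − a_n (r')^n, and iterate. -/
open Filter Finset

/-- Greedy digit at level `m` for remainder `y`. -/
noncomputable def gd (r' : ℝ) (m : ℤ) (y : ℝ) : ℤ :=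
  if r' ^ m ≤ |y| then round (y / r' ^ m) else 0

/-- Remainders of the greedy algorithm. -/
noncomputable def gr (r' : ℝ) (N : ℤ) (x : ℝ) : ℕ → ℝ
  | 0 => x
  | k + 1 => gr r' N x k - (gd r' (N + k) (gr r' N x k) : ℝ) * r' ^ (N + (k : ℤ))

lemma gr_bound (r' : ℝ) (h0 : 0 < r') (h1 : r' < 1) (N : ℤ) (x : ℝ)
    (hx : |x| < r' ^ (N - 1)) : ∀ k : ℕ, |gr r' N x k| < r' ^ (N + (k : ℤ) - 1) := by
  intro k
  induction k with
  | zero => simpa [gr] using hx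
  | succ k ih =>
    set y := gr r' N x k with hy
    have hpow : (0 : ℝ) < r' ^ (N + (k : ℤ)) := zpow_pos h0 _
    have hstep : gr r' N x (k + 1) = y - (gd r' (N + k) y : ℝ) * r' ^ (N + (k : ℤ)) := rfl
    have hkey : |gr r' N x (k + 1)| < r' ^ (N + (k : ℤ)) := by
      rw [hstep]
      unfold gd
      by_cases h : r' ^ (N + (k : ℤ)) ≤ |y|
      · rw [if_pos h]
        have hne : r' ^ (N + (k : ℤ)) ≠ 0 := ne_of_gt hpow
        have : y - (round (y / r' ^ (N + (k : ℤ))) : ℝ) * r' ^ (N + (k : ℤ))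
            = (y / r' ^ (N + (k : ℤ)) - round (y / r' ^ (N + (k : ℤ)))) * r' ^ (N + (k : ℤ)) := by
          field_simp
        rw [this, abs_mul, abs_of_pos hpow]
        have h2 : |y / r' ^ (N + (k : ℤ)) - (round (y / r' ^ (N + (k : ℤ))) : ℝ)| ≤ 1 / 2 :=
          abs_sub_round _
        calc |y / r' ^ (N + (k : ℤ)) - (round (y / r' ^ (N + (k : ℤ))) : ℝ)| * r' ^ (N + (k : ℤ))
            ≤ (1 / 2) * r' ^ (N + (k : ℤ)) := by nlinarith
          _ < r' ^ (N + (k : ℤ)) := by nlinarith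
      · rw [if_neg h]
        push_neg at h
        simpa using h
    have : N + ((k : ℤ) + 1) - 1 = N + (k : ℤ) := by ring
    rw [show ((k + 1 : ℕ) : ℤ) = (k : ℤ) + 1 by push_cast; ring, this]
    exact hkey

lemma gd_bound (r' : ℝ) (h0 : 0 < r') (h1 : r' < 1) (m : ℤ) (y : ℝ)
    (hy : |y| < r' ^ (m - 1)) : |(gd r' m y : ℝ)| < 1 + 1 / r' := by
  have hr : (0 : ℝ) < 1 / r' := by positivity
  unfold gd
  by_cases h : r' ^ m ≤ |y|
  · rw [if_pos h]
    have hpow : (0 : ℝ) < r' ^ m := zpow_pos h0 _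
    have h2 : |y / r' ^ m - (round (y / r' ^ m) : ℝ)| ≤ 1 / 2 := abs_sub_round _
    have h3 : |(round (y / r' ^ m) : ℝ)| ≤ |y / r' ^ m| + 1 / 2 := by
      have h6 : |(round (y / r' ^ m) : ℝ)| - |y / r' ^ m| ≤ 1 / 2 :=
        le_trans (abs_sub_abs_le_abs_sub _ _) (by rw [abs_sub_comm]; exact h2)
      linarith
    have h4 : |y / r' ^ m| < 1 / r' := by
      rw [abs_div, abs_of_pos hpow, div_lt_iff₀ hpow]
      have : r' ^ (m - 1) = r' ^ m / r' := by
        rw [zpow_sub_one₀ (ne_of_gt h0)]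
        ring
      calc |y| < r' ^ (m - 1) := hy
        _ = 1 / r' * r' ^ m := by rw [this]; ring
    linarith
  · rw [if_neg h]
    simp only [Int.cast_zero, abs_zero]
    linarith

lemma gr_telescope (r' : ℝ) (N : ℤ) (x : ℝ) : ∀ k : ℕ,
    x - gr r' N x k = ∑ j ∈ Finset.range k, (gd r' (N + j) (gr r' N x j) : ℝ) * r' ^ (N + (j : ℤ)) := by
  intro k
  induction k with
  | zero => simp [gr]
  | succ k ih =>
    rw [Finset.sum_range_succ, ← ih]
    show x - (gr r' N x k - (gd r' (N + k) (gr r' N x k) : ℝ) * r' ^ (N + (k : ℤ))) = _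
    ring

/-- Greedy expansion: for fixed `0 < r' < 1`, every nonzero real `x` can be written as
`x = ∑_{n ≥ N} aₙ (r')ⁿ` with integer coefficients `|aₙ| < 1 + 1/r'`, where `N` can be
chosen with `(r')^N ≤ |x|`. -/
theorem greedy_expansion (r' : ℝ) (h0 : 0 < r') (h1 : r' < 1) (x : ℝ) (hx : x ≠ 0) :
    ∃ (N : ℤ) (a : ℤ → ℤ),
      (∀ n < N, a n = 0) ∧
      (∀ n : ℤ, |(a n : ℝ)| < 1 + 1 / r') ∧
      r' ^ N ≤ |x| ∧
      HasSum (fun n : ℤ => (a n : ℝ) * r' ^ n) x := by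
  have hxpos : 0 < |x| := abs_pos.mpr hx
  have hlogr : Real.log r' < 0 := Real.log_neg h0 h1
  -- characterization of the zpow inequality
  have key : ∀ n : ℤ, (r' ^ n ≤ |x| ↔ Real.log |x| / Real.log r' ≤ n) := by
    intro n
    rw [← Real.log_le_log_iff (zpow_pos h0 _) hxpos, Real.log_zpow,
      div_le_iff_of_neg hlogr, mul_comm]
  set N : ℤ := ⌈Real.log |x| / Real.log r'⌉ with hN
  have hNle : r' ^ N ≤ |x| := (key N).mpr (Int.le_ceil _)
  have hNlt : |x| < r' ^ (N - 1) := by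
    by_contra h
    push_neg at h
    have := (key (N - 1)).mp h
    have := Int.ceil_le.mpr this
    omega
  -- the coefficient function
  set a : ℤ → ℤ := fun m => if N ≤ m then gd r' m (gr r' N x (m - N).toNat) else 0 with ha
  have hgrb := gr_bound r' h0 h1 N x hNlt
  refine ⟨N, a, ?_, ?_, hNle, ?_⟩
  · intro n hn
    simp [ha, not_le.mpr hn]
  · intro n
    by_cases hn : N ≤ n
    · have hrepr : n = N + ((n - N).toNat : ℤ) := by omega
      simp only [ha, if_pos hn]
      have := gd_bound r' h0 h1 n (gr r' N x (n - N).toNat) ?_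
      · exact this
      · have := hgrb (n - N).toNat
        rwa [← hrepr] at this
    · simp only [ha, if_neg hn, Int.cast_zero, abs_zero]
      positivity
  · -- the sum
    set f : ℤ → ℝ := fun n => (a n : ℝ) * r' ^ n with hf
    set e : ℕ → ℤ := fun k => N + k with he
    have hinj : Function.Injective e := by
      intro i j h
      simpa [he] using h
    have hsupp : ∀ m ∉ Set.range e, f m = 0 := by
      intro m hm
      have : ¬ N ≤ m := by
        intro hle
        exact hm ⟨(m - N).toNat, by simp [he]; omega⟩
      simp [hf, ha, this]
    rw [← hinj.hasSum_iff hsupp]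
    have hcomp : ∀ k : ℕ, (f ∘ e) k = (gd r' (N + k) (gr r' N x k) : ℝ) * r' ^ (N + (k : ℤ)) := by
      intro k
      have h1' : N ≤ N + (k : ℤ) := by omega
      have h2' : ((N + (k : ℤ) - N).toNat) = k := by omega
      simp [hf, he, ha, h1', h2']
    -- summability
    have hterm : ∀ k : ℕ, |(f ∘ e) k| ≤ ((1 + 1 / r') * r' ^ N) * r' ^ k := by
      intro k
      rw [hcomp k, abs_mul]
      have hb : |(gd r' (N + k) (gr r' N x k) : ℝ)| < 1 + 1 / r' := by
        have := gd_bound r' h0 h1 (N + k) (gr r' N x k) (hgrb k)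
        exact this
      have hpow : |r' ^ (N + (k : ℤ))| = r' ^ N * r' ^ k := by
        rw [abs_of_pos (zpow_pos h0 _), zpow_add₀ (ne_of_gt h0), zpow_natCast]
      rw [hpow]
      have : (0:ℝ) ≤ r' ^ N * r' ^ k := by positivity
      nlinarith [abs_nonneg ((gd r' (N + k) (gr r' N x k) : ℝ))]
    have hsummable : Summable (f ∘ e) := by
      apply Summable.of_norm
      apply Summable.of_nonneg_of_le (fun k => norm_nonneg _) (fun k => by
        simpa [Real.norm_eq_abs] using hterm k)
      exact (summable_geometric_of_lt_one (le_of_lt h0) h1).mul_left _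
    rw [hsummable.hasSum_iff_tendsto_nat]
    have hps : ∀ n : ℕ, ∑ i ∈ Finset.range n, (f ∘ e) i = x - gr r' N x n := by
      intro n
      rw [gr_telescope r' N x n]
      exact Finset.sum_congr rfl (fun j _ => hcomp j)
    simp only [hps]
    have hrem : Tendsto (fun n : ℕ => gr r' N x n) atTop (nhds 0) := by
      have hb : ∀ n : ℕ, ‖gr r' N x n‖ ≤ r' ^ (N - 1) * r' ^ n := by
        intro n
        rw [Real.norm_eq_abs]
        have h5 := hgrb n
        have heq : r' ^ (N + (n : ℤ) - 1) = r' ^ (N - 1) * r' ^ n := by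
          rw [show N + (n : ℤ) - 1 = (N - 1) + n by ring,
            zpow_add₀ (ne_of_gt h0), zpow_natCast]
        rw [heq] at h5
        exact le_of_lt h5
      exact squeeze_zero_norm hb (by
        simpa using (tendsto_pow_atTop_nhds_zero_of_lt_one (le_of_lt h0) h1).const_mul
          (r' ^ (N - 1)))
    have := (tendsto_const_nhds (x := x) (f := atTop (α := ℕ))).sub hrem
    simpa using this
end

section
/- Let 0 < r < 1 and let S be a set. The set Z((T))_r(S) of Laurent series Σ_{n≫−∞} a_n T^n with coefficients a_n : S → ℤ such that sup_{s∈S} Σ_n |a_n(s)| r^n < ∞ forms a commutative ring under coefficientwise addition and convolution multiplication, and for each s ∈ S evaluation at s gives a ring homomorphism to the ring Z((T))_r(*) = { Σ a_n T^n : a_n ∈ ℤ, Σ|a_n| r^n < ∞ }, which is an integral domain. -/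
/-- `Z((T))_r(S)`: Laurent series whose coefficients are integer-valued functions on
`S`, with support bounded below and a uniform weighted ℓ¹ bound. -/
def ZTrSec (r : ℝ) (S : Type*) : Set (ℤ → S → ℤ) :=
  {a | (∃ N : ℤ, ∀ n < N, a n = 0) ∧
    ∃ c : ℝ, ∀ s : S, Summable (fun n : ℤ => |(a n s : ℝ)| * r ^ n) ∧
      ∑' n : ℤ, |(a n s : ℝ)| * r ^ n ≤ c}

/-- `Z((T))_r(*)`: integer Laurent series with support bounded below and finite
weighted ℓ¹ norm. -/
def ZTrPt (r : ℝ) : Set (ℤ → ℤ) :=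
  {a | (∃ N : ℤ, ∀ n < N, a n = 0) ∧
    Summable (fun n : ℤ => |(a n : ℝ)| * r ^ n)}

/-- Convolution multiplication on `S`-valued coefficients. -/
noncomputable def convSec {S : Type*} (a b : ℤ → S → ℤ) : ℤ → S → ℤ :=
  fun n s => ∑' k : ℤ, a k s * b (n - k) s

/-- Convolution multiplication on integer coefficients. -/
noncomputable def convPt (a b : ℤ → ℤ) : ℤ → ℤ :=
  fun n => ∑' k : ℤ, a k * b (n - k)

namespace ZTrAux


def Bdd (a : ℤ → ℤ) : Prop := ∃ N : ℤ, ∀ n < N, a n = 0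

lemma isPWO {a : ℤ → ℤ} (h : Bdd a) : (Function.support a).IsPWO := by
  obtain ⟨N, hN⟩ := h
  have hbb : BddBelow (Function.support a) :=
    ⟨N, fun n hn => le_of_not_gt fun hlt => hn (hN n hlt)⟩
  exact Set.IsWF.isPWO hbb.wellFoundedOn_lt

noncomputable def toHahn (a : ℤ → ℤ) (h : Bdd a) : HahnSeries ℤ ℤ := ⟨a, isPWO h⟩

lemma finsupp {a b : ℤ → ℤ} (ha : Bdd a) (hb : Bdd b) (n : ℤ) :
    (Function.support fun k => a k * b (n - k)).Finite := by
  obtain ⟨N, hN⟩ := ha; obtain ⟨M, hM⟩ := hb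
  refine (Set.finite_Icc N (n - M)).subset fun k hk => ?_
  simp only [Function.mem_support] at hk
  refine Set.mem_Icc.2 ⟨le_of_not_gt fun h => hk (by rw [hN k h, zero_mul]), ?_⟩
  exact le_of_not_gt fun h => hk (by rw [hM _ (by omega), mul_zero])

lemma convPt_eq_sum {a b : ℤ → ℤ} (ha : Bdd a) (hb : Bdd b) (n : ℤ) :
    convPt a b n = ∑ k ∈ (finsupp ha hb n).toFinset, a k * b (n - k) :=
  tsum_eq_sum (fun k hk => by
    by_contra h
    exact hk (by simpa [Function.mem_support] using h))

lemma convPt_coeff {a b : ℤ → ℤ} (ha : Bdd a) (hb : Bdd b) (n : ℤ) :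
    convPt a b n = (toHahn a ha * toHahn b hb).coeff n := by
  rw [HahnSeries.coeff_mul, convPt_eq_sum ha hb n]
  refine Finset.sum_nbij' (fun k => (k, n - k)) (fun p => p.1) ?_ ?_ ?_ ?_ ?_
  · intro k hk
    simp only [Set.Finite.mem_toFinset, Function.mem_support] at hk
    simp only [Finset.mem_addAntidiagonal, HahnSeries.mem_support]
    exact ⟨left_ne_zero_of_mul hk, right_ne_zero_of_mul hk, by ring⟩
  · intro p hp
    simp only [Finset.mem_addAntidiagonal, HahnSeries.mem_support] at hp
    simp only [Set.Finite.mem_toFinset, Function.mem_support]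
    have : p.2 = n - p.1 := by omega
    exact mul_ne_zero hp.1 (this ▸ hp.2.1)
  · intro k _; rfl
  · intro p hp
    simp only [Finset.mem_addAntidiagonal] at hp
    have : p.2 = n - p.1 := by omega
    exact Prod.ext rfl this.symm
  · intro k _; rfl

lemma bdd_conv {a b : ℤ → ℤ} (ha : Bdd a) (hb : Bdd b) : Bdd (convPt a b) := by
  obtain ⟨N, hN⟩ := ha; obtain ⟨M, hM⟩ := hb
  refine ⟨N + M, fun n hn => ?_⟩
  show (∑' k : ℤ, a k * b (n - k)) = 0
  have h0 : ∀ k : ℤ, a k * b (n - k) = 0 := fun k => by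
    rcases lt_or_ge k N with h | h
    · rw [hN k h, zero_mul]
    · rw [hM _ (by omega), mul_zero]
  simp [h0]

lemma toHahn_conv {a b : ℤ → ℤ} (ha : Bdd a) (hb : Bdd b) :
    toHahn (convPt a b) (bdd_conv ha hb) = toHahn a ha * toHahn b hb :=
  HahnSeries.ext (funext fun n => convPt_coeff ha hb n)


lemma conv_comm (a b : ℤ → ℤ) : convPt a b = convPt b a := by
  funext n
  show ∑' k : ℤ, a k * b (n - k) = ∑' k : ℤ, b k * a (n - k)
  rw [← (Equiv.subLeft n).tsum_eq (fun k => b k * a (n - k))]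
  exact tsum_congr fun k => by simp [mul_comm]

lemma conv_assoc {a b c : ℤ → ℤ} (ha : Bdd a) (hb : Bdd b) (hc : Bdd c) :
    convPt (convPt a b) c = convPt a (convPt b c) := by
  funext n
  rw [convPt_coeff (bdd_conv ha hb) hc n, convPt_coeff ha (bdd_conv hb hc) n,
    toHahn_conv ha hb, toHahn_conv hb hc, mul_assoc]

lemma bdd_add {a b : ℤ → ℤ} (ha : Bdd a) (hb : Bdd b) : Bdd (a + b) := by
  obtain ⟨N, hN⟩ := ha; obtain ⟨M, hM⟩ := hb
  exact ⟨min N M, fun n hn => by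
    show a n + b n = 0
    rw [hN n (lt_of_lt_of_le hn (min_le_left _ _)), hM n (lt_of_lt_of_le hn (min_le_right _ _)),
      add_zero]⟩

lemma toHahn_add {a b : ℤ → ℤ} (ha : Bdd a) (hb : Bdd b) :
    toHahn (a + b) (bdd_add ha hb) = toHahn a ha + toHahn b hb :=
  HahnSeries.ext rfl

lemma conv_add {a b c : ℤ → ℤ} (ha : Bdd a) (hb : Bdd b) (hc : Bdd c) :
    convPt a (b + c) = convPt a b + convPt a c := by
  funext n
  show convPt a (b + c) n = convPt a b n + convPt a c n
  rw [convPt_coeff ha (bdd_add hb hc) n, convPt_coeff ha hb n, convPt_coeff ha hc n,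
    toHahn_add hb hc, mul_add, HahnSeries.coeff_add]


lemma conv_bound {r : ℝ} (hr0 : 0 < r) {a b : ℤ → ℤ} (ha : Bdd a) (hb : Bdd b)
    (hsa : Summable fun n : ℤ => |(a n : ℝ)| * r ^ n)
    (hsb : Summable fun n : ℤ => |(b n : ℝ)| * r ^ n) :
    Summable (fun n : ℤ => |(convPt a b n : ℝ)| * r ^ n) ∧
      ∑' n : ℤ, |(convPt a b n : ℝ)| * r ^ n ≤
        (∑' n : ℤ, |(a n : ℝ)| * r ^ n) * ∑' n : ℤ, |(b n : ℝ)| * r ^ n := by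
  set A : ℤ → ℝ := fun n => |(a n : ℝ)| * r ^ n with hA
  set B : ℤ → ℝ := fun n => |(b n : ℝ)| * r ^ n with hB
  have hAnn : ∀ n, 0 ≤ A n := fun n => mul_nonneg (abs_nonneg _) (zpow_nonneg hr0.le _)
  have hBnn : ∀ n, 0 ≤ B n := fun n => mul_nonneg (abs_nonneg _) (zpow_nonneg hr0.le _)
  have H : Summable fun p : ℤ × ℤ => A p.1 * B p.2 :=
    hsa.mul_of_nonneg hsb hAnn hBnn
  let e : ℤ × ℤ ≃ ℤ × ℤ :=
    { toFun := fun p => (p.2, p.1 - p.2)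
      invFun := fun q => (q.1 + q.2, q.1)
      left_inv := fun p => by simp
      right_inv := fun q => by simp }
  have hG : Summable fun p : ℤ × ℤ => A p.2 * B (p.1 - p.2) := e.summable_iff.2 H
  have hGnn : ∀ p : ℤ × ℤ, 0 ≤ A p.2 * B (p.1 - p.2) :=
    fun p => mul_nonneg (hAnn _) (hBnn _)
  obtain ⟨hfib, hrows⟩ := (summable_prod_of_nonneg hGnn).1 hG
  have key : ∀ n : ℤ, |(convPt a b n : ℝ)| * r ^ n ≤ ∑' k : ℤ, A k * B (n - k) := by
    intro n
    rw [convPt_eq_sum ha hb n]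
    set T := (finsupp ha hb n).toFinset
    calc |((∑ k ∈ T, a k * b (n - k) : ℤ) : ℝ)| * r ^ n
        ≤ (∑ k ∈ T, |(a k : ℝ)| * |(b (n - k) : ℝ)|) * r ^ n := by
          refine mul_le_mul_of_nonneg_right ?_ (zpow_nonneg hr0.le _)
          push_cast
          exact (Finset.abs_sum_le_sum_abs _ _).trans
            (le_of_eq (Finset.sum_congr rfl fun k _ => abs_mul _ _))
      _ = ∑ k ∈ T, A k * B (n - k) := by
          rw [Finset.sum_mul]
          refine Finset.sum_congr rfl fun k _ => ?_
          simp only [hA, hB]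
          rw [show A k * B (n - k) = |(a k : ℝ)| * |(b (n - k) : ℝ)| * (r ^ k * r ^ (n - k)) by
            ring, ← zpow_add₀ hr0.ne', add_sub_cancel]
      _ ≤ ∑' k : ℤ, A k * B (n - k) :=
          Summable.sum_le_tsum T (fun k _ => mul_nonneg (hAnn _) (hBnn _)) (hfib n)
  have hsum : Summable (fun n : ℤ => |(convPt a b n : ℝ)| * r ^ n) :=
    Summable.of_nonneg_of_le
      (fun n => mul_nonneg (abs_nonneg _) (zpow_nonneg hr0.le _)) key hrows
  refine ⟨hsum, ?_⟩
  calc ∑' n : ℤ, |(convPt a b n : ℝ)| * r ^ n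
      ≤ ∑' n : ℤ, ∑' k : ℤ, A k * B (n - k) := Summable.tsum_le_tsum key hsum hrows
    _ = ∑' p : ℤ × ℤ, A p.2 * B (p.1 - p.2) := (Summable.tsum_prod' hG (hfib)).symm
    _ = ∑' p : ℤ × ℤ, A p.1 * B p.2 := e.tsum_eq (fun q : ℤ × ℤ => A q.1 * B q.2)
    _ = (∑' n : ℤ, A n) * ∑' n : ℤ, B n := (Summable.tsum_mul_tsum hsa hsb H).symm


lemma conv_vanish {a b : ℤ → ℤ} {N M : ℤ} (hN : ∀ n < N, a n = 0) (hM : ∀ n < M, b n = 0) :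
    ∀ n < N + M, convPt a b n = 0 := fun n hn => by
  show (∑' k : ℤ, a k * b (n - k)) = 0
  have h0 : ∀ k : ℤ, a k * b (n - k) = 0 := fun k => by
    rcases lt_or_ge k N with h | h
    · rw [hN k h, zero_mul]
    · rw [hM _ (by omega), mul_zero]
  simp [h0]

end ZTrAux

/-- `Z((T))_r(S)` is a commutative ring under coefficientwise addition and convolution
multiplication, evaluation at each `s ∈ S` is a ring homomorphism into `Z((T))_r(*)`,
and `Z((T))_r(*)` is an integral domain (has no zero divisors). -/
theorem ZTrSec_ring (r : ℝ) (hr0 : 0 < r) (hr1 : r < 1) (S : Type*) :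
    (∀ a ∈ ZTrSec r S, ∀ b ∈ ZTrSec r S, a + b ∈ ZTrSec r S) ∧
    (∀ a ∈ ZTrSec r S, ∀ b ∈ ZTrSec r S, convSec a b ∈ ZTrSec r S) ∧
    (∀ a ∈ ZTrSec r S, ∀ b ∈ ZTrSec r S, convSec a b = convSec b a) ∧
    (∀ a ∈ ZTrSec r S, ∀ b ∈ ZTrSec r S, ∀ c ∈ ZTrSec r S,
      convSec (convSec a b) c = convSec a (convSec b c)) ∧
    (∀ a ∈ ZTrSec r S, ∀ b ∈ ZTrSec r S, ∀ c ∈ ZTrSec r S,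
      convSec a (b + c) = convSec a b + convSec a c) ∧
    (∀ (s : S), ∀ a ∈ ZTrSec r S, (fun n => a n s) ∈ ZTrPt r) ∧
    (∀ (s : S), ∀ a ∈ ZTrSec r S, ∀ b ∈ ZTrSec r S,
      (fun n => (a + b) n s) = (fun n => a n s) + (fun n => b n s)) ∧
    (∀ (s : S), ∀ a ∈ ZTrSec r S, ∀ b ∈ ZTrSec r S,
      (fun n => convSec a b n s) = convPt (fun n => a n s) (fun n => b n s)) ∧
    (∀ a ∈ ZTrPt r, ∀ b ∈ ZTrPt r, convPt a b = 0 → a = 0 ∨ b = 0) := by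
  open ZTrAux in
  refine ⟨?_, ?_, ?_, ?_, ?_, ?_, ?_, ?_, ?_⟩
  · -- addition closure
    rintro a ⟨⟨N, hN⟩, ca, hca⟩ b ⟨⟨M, hM⟩, cb, hcb⟩
    refine ⟨⟨min N M, fun n hn => by
      rw [Pi.add_apply, hN n (lt_of_lt_of_le hn (min_le_left _ _)),
        hM n (lt_of_lt_of_le hn (min_le_right _ _)), add_zero]⟩, ca + cb, fun s => ?_⟩
    have hle : ∀ n : ℤ, |((a + b) n s : ℝ)| * r ^ n ≤
        |(a n s : ℝ)| * r ^ n + |(b n s : ℝ)| * r ^ n := fun n => by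
      rw [← add_mul]
      refine mul_le_mul_of_nonneg_right ?_ (zpow_nonneg hr0.le _)
      show |((a n s + b n s : ℤ) : ℝ)| ≤ _
      push_cast
      exact abs_add_le _ _
    have hsum : Summable fun n : ℤ => |((a + b) n s : ℝ)| * r ^ n :=
      Summable.of_nonneg_of_le (fun n => mul_nonneg (abs_nonneg _) (zpow_nonneg hr0.le _))
        hle ((hca s).1.add (hcb s).1)
    refine ⟨hsum, ?_⟩
    calc ∑' n : ℤ, |((a + b) n s : ℝ)| * r ^ n
        ≤ ∑' n : ℤ, (|(a n s : ℝ)| * r ^ n + |(b n s : ℝ)| * r ^ n) :=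
          Summable.tsum_le_tsum hle hsum ((hca s).1.add (hcb s).1)
      _ = (∑' n : ℤ, |(a n s : ℝ)| * r ^ n) + ∑' n : ℤ, |(b n s : ℝ)| * r ^ n :=
          Summable.tsum_add (hca s).1 (hcb s).1
      _ ≤ ca + cb := add_le_add (hca s).2 (hcb s).2
  · -- multiplication closure
    rintro a ⟨⟨N, hN⟩, ca, hca⟩ b ⟨⟨M, hM⟩, cb, hcb⟩
    have hNs : ∀ s : S, ∀ n < N, a n s = 0 := fun s n hn => congrFun (hN n hn) s
    have hMs : ∀ s : S, ∀ n < M, b n s = 0 := fun s n hn => congrFun (hM n hn) s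
    refine ⟨⟨N + M, fun n hn => funext fun s =>
      conv_vanish (hNs s) (hMs s) n hn⟩, ca * cb, fun s => ?_⟩
    have hb := conv_bound hr0 ⟨N, hNs s⟩ ⟨M, hMs s⟩ (hca s).1 (hcb s).1
    refine ⟨hb.1, hb.2.trans ?_⟩
    have h1 := (hca s).2
    have h2 := (hcb s).2
    have n1 : (0:ℝ) ≤ ∑' n : ℤ, |(a n s : ℝ)| * r ^ n :=
      tsum_nonneg fun n => mul_nonneg (abs_nonneg _) (zpow_nonneg hr0.le _)
    have n2 : (0:ℝ) ≤ ∑' n : ℤ, |(b n s : ℝ)| * r ^ n :=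
      tsum_nonneg fun n => mul_nonneg (abs_nonneg _) (zpow_nonneg hr0.le _)
    exact mul_le_mul h1 h2 n2 (n1.trans h1)
  · -- commutativity
    rintro a - b -
    funext n s
    exact congrFun (conv_comm (fun m => a m s) (fun m => b m s)) n
  · -- associativity
    rintro a ⟨⟨N, hN⟩, -⟩ b ⟨⟨M, hM⟩, -⟩ c ⟨⟨P, hP⟩, -⟩
    funext n s
    have hA : Bdd fun m => a m s := ⟨N, fun m hm => congrFun (hN m hm) s⟩
    have hB : Bdd fun m => b m s := ⟨M, fun m hm => congrFun (hM m hm) s⟩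
    have hC : Bdd fun m => c m s := ⟨P, fun m hm => congrFun (hP m hm) s⟩
    exact congrFun (conv_assoc hA hB hC) n
  · -- distributivity
    rintro a ⟨⟨N, hN⟩, -⟩ b ⟨⟨M, hM⟩, -⟩ c ⟨⟨P, hP⟩, -⟩
    funext n s
    have hA : Bdd fun m => a m s := ⟨N, fun m hm => congrFun (hN m hm) s⟩
    have hB : Bdd fun m => b m s := ⟨M, fun m hm => congrFun (hM m hm) s⟩
    have hC : Bdd fun m => c m s := ⟨P, fun m hm => congrFun (hP m hm) s⟩
    exact congrFun (conv_add hA hB hC) n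
  · -- evaluation lands in ZTrPt
    rintro s a ⟨⟨N, hN⟩, c, hc⟩
    exact ⟨⟨N, fun n hn => congrFun (hN n hn) s⟩, (hc s).1⟩
  · -- evaluation is additive
    rintro s a - b -
    rfl
  · -- evaluation is multiplicative
    rintro s a - b -
    rfl
  · -- no zero divisors
    rintro a ⟨ha, -⟩ b ⟨hb, -⟩ h
    have hxy : toHahn a ha * toHahn b hb = 0 := by
      refine HahnSeries.ext (funext fun n => ?_)
      rw [← convPt_coeff ha hb n, h]
      rfl
    rcases mul_eq_zero.mp hxy with hx | hx
    · exact Or.inl (funext fun n => congrFun (congrArg HahnSeries.coeff hx) n)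
    · exact Or.inr (funext fun n => congrFun (congrArg HahnSeries.coeff hx) n)
end

section
/- Let 0 < r' < r < 1 and let S be an extremally disconnected compact Hausdorff space. Then the map θ_{r'} : Z((T))_r(S) → C(S, ℝ) sending Σ a_n T^n (with a_n ∈ C(S,ℤ)) to the function s ↦ Σ_n a_n(s)(r')^n is a surjective group homomorphism. -/
/-- `Z((T))_r(S)` for a profinite/extremally disconnected `S`: Laurent series with
continuous integer-valued coefficient functions, support bounded below, and a uniform
weighted ℓ¹ bound `∀ s, ∑ |aₙ(s)| rⁿ ≤ c` for some `c > 0`. -/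
def ZTrCond (r : ℝ) (S : Type*) [TopologicalSpace S] : Set (ℤ → C(S, ℤ)) :=
  {a | (∃ N : ℤ, ∀ n < N, a n = 0) ∧
    ∃ c : ℝ, ∀ s : S, Summable (fun n : ℤ => |(a n s : ℝ)| * r ^ n) ∧
      ∑' n : ℤ, |(a n s : ℝ)| * r ^ n ≤ c}

open Filter Topology

section Aux

variable {S : Type*} [TopologicalSpace S]

/-- Piecewise-constant selection along a finite list of clopen sets. -/
lemma exists_locallyConstant_of_clopen_list
    (L : List (Set S × ℤ)) (hL : ∀ p ∈ L, IsClopen p.1) :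
    ∃ f : S → ℤ, IsLocallyConstant f ∧
      ∀ x, (∃ p ∈ L, x ∈ p.1) → ∃ p ∈ L, x ∈ p.1 ∧ f x = p.2 := by
  classical
  induction L with
  | nil => exact ⟨0, IsLocallyConstant.const 0, by simp⟩
  | cons p rest ih =>
    obtain ⟨f, hf, hspec⟩ := ih (fun q hq => hL q (List.mem_cons_of_mem _ hq))
    have hp : IsClopen p.1 := hL p (List.mem_cons_self)
    refine ⟨fun x => if x ∈ p.1 then p.2 else f x, ?_, ?_⟩
    · rw [IsLocallyConstant.iff_exists_open]
      intro x
      by_cases hx : x ∈ p.1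
      · exact ⟨p.1, hp.isOpen, hx, fun y hy => by simp [hx, hy]⟩
      · obtain ⟨U, hU, hxU, hUf⟩ := hf.exists_open x
        refine ⟨U ∩ p.1ᶜ, hU.inter hp.compl.isOpen, ⟨hxU, hx⟩, fun y hy => ?_⟩
        have hy2 : y ∉ p.1 := hy.2
        simp only [if_neg hy2, if_neg hx]
        exact hUf y hy.1
    · intro x hex
      by_cases hx : x ∈ p.1
      · exact ⟨p, List.mem_cons_self, hx, by simp [hx]⟩
      · have hrest : ∃ q ∈ rest, x ∈ q.1 := by
          obtain ⟨q, hq, hxq⟩ := hex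
          rcases List.mem_cons.mp hq with h | h
          · exact absurd hxq (h ▸ hx)
          · exact ⟨q, h, hxq⟩
        obtain ⟨q, hq, hxq, hfq⟩ := hspec x hrest
        exact ⟨q, List.mem_cons_of_mem _ hq, hxq, by simp [hx, hfq]⟩

variable [CompactSpace S] [T2Space S] [TotallyDisconnectedSpace S]

/-- On a compact, Hausdorff, totally disconnected space, every continuous real
function admits a continuous integer-valued approximation within distance 1. -/
lemma exists_int_approx (g : C(S, ℝ)) : ∃ a : C(S, ℤ), ∀ s, |g s - (a s : ℝ)| ≤ 1 := by
  classical
  -- clopen neighborhoods where g varies by less than 1/2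
  have hV : ∀ s : S, ∃ V : Set S, IsClopen V ∧ s ∈ V ∧
      V ⊆ g ⁻¹' Metric.ball (g s) (1/2) := by
    intro s
    exact compact_exists_isClopen_in_isOpen
      (g.continuous.isOpen_preimage _ Metric.isOpen_ball)
      (by simp)
  choose V hVclopen hVmem hVsub using hV
  obtain ⟨t, ht⟩ := isCompact_univ.elim_finite_subcover V
    (fun s => (hVclopen s).isOpen) (fun x _ => Set.mem_iUnion.mpr ⟨x, hVmem x⟩)
  set L : List (Set S × ℤ) := t.toList.map (fun s => (V s, round (g s))) with hLdef
  have hLclopen : ∀ p ∈ L, IsClopen p.1 := by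
    intro p hp
    simp only [hLdef, List.mem_map] at hp
    obtain ⟨s, _, rfl⟩ := hp
    exact hVclopen s
  obtain ⟨f, hf, hspec⟩ := exists_locallyConstant_of_clopen_list L hLclopen
  refine ⟨⟨f, hf.continuous⟩, ?_⟩
  intro s
  have hs : ∃ p ∈ L, s ∈ p.1 := by
    have := ht (Set.mem_univ s)
    simp only [Set.mem_iUnion] at this
    obtain ⟨i, hi, hsi⟩ := this
    exact ⟨(V i, round (g i)), by
      simp only [hLdef, List.mem_map]
      exact ⟨i, Finset.mem_toList.mpr hi, rfl⟩, hsi⟩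
  obtain ⟨p, hpL, hsp, hfp⟩ := hspec s hs
  simp only [hLdef, List.mem_map] at hpL
  obtain ⟨i, _, rfl⟩ := hpL
  have h1 : |g s - g i| < 1/2 := by
    have := hVsub i hsp
    simpa [Real.dist_eq] using this
  have h2 : |g i - (round (g i) : ℝ)| ≤ 1/2 := abs_sub_round (g i)
  have : |g s - ((round (g i) : ℤ) : ℝ)| ≤ 1 := by
    calc |g s - ((round (g i) : ℤ) : ℝ)|
        = |(g s - g i) + (g i - (round (g i) : ℝ))| := by ring_nf
      _ ≤ |g s - g i| + |g i - (round (g i) : ℝ)| := abs_add_le _ _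
      _ ≤ 1/2 + 1/2 := add_le_add h1.le h2
      _ = 1 := by norm_num
  simpa [hfp] using this

/-- Continuous integer approximation, chosen. -/
noncomputable def intApprox (g : C(S, ℝ)) : C(S, ℤ) := (exists_int_approx g).choose

lemma intApprox_spec (g : C(S, ℝ)) : ∀ s, |g s - (intApprox g s : ℝ)| ≤ 1 :=
  (exists_int_approx g).choose_spec

/-- Cast a continuous integer-valued function to a continuous real function. -/
def zToReal (a : C(S, ℤ)) : C(S, ℝ) :=
  ⟨fun s => (a s : ℝ), continuous_of_discreteTopology.comp a.continuous⟩

/-- The greedy remainder sequence: `g 0 = f`,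
`g (n+1) = (g n - intApprox (g n)) / r'`. -/
noncomputable def gseq (r' : ℝ) (f : C(S, ℝ)) : ℕ → C(S, ℝ)
  | 0 => f
  | n + 1 => r'⁻¹ • (gseq r' f n - zToReal (intApprox (gseq r' f n)))

end Aux

/-- Extension of a `ℕ`-indexed `HasSum` to `ℤ` by zero on negatives. -/
lemma hasSum_int_extend {G : ℕ → ℝ} {F : ℤ → ℝ} (h0 : ∀ m : ℕ, F m = G m)
    (hneg : ∀ n : ℤ, n < 0 → F n = 0) {x : ℝ} (hG : HasSum G x) : HasSum F x := by
  have h := hG.int_rec (hasSum_zero : HasSum (fun _ : ℕ => (0 : ℝ)) 0)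
  rw [add_zero] at h
  convert h using 1
  funext n
  cases n with
  | ofNat m => exact h0 m
  | negSucc m => exact hneg _ (Int.negSucc_lt_zero m)

/-- Summability of `θ_{r'}` series for members of `ZTrCond r S`. -/
lemma summable_theta {S : Type*} [TopologicalSpace S] {r r' : ℝ} (h0 : 0 < r')
    (h1 : r' < r) {a : ℤ → C(S, ℤ)} (ha : a ∈ ZTrCond r S) (s : S) :
    Summable (fun n : ℤ => ((a n s : ℝ)) * r' ^ n) := by
  obtain ⟨⟨N, hN⟩, c, hc⟩ := ha
  have hr : 0 < r := h0.trans h1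
  apply Summable.of_norm_bounded (g := fun n : ℤ => (r'/r) ^ N * (|(a n s : ℝ)| * r ^ n))
  · exact ((hc s).1).mul_left _
  · intro n
    by_cases hn : n < N
    · simp [hN n hn]
    · push_neg at hn
      have hpow : (r'/r) ^ n ≤ (r'/r) ^ N :=
        zpow_le_zpow_right_of_le_one₀ (div_pos h0 hr) (div_le_one_of_le₀ h1.le hr.le) hn
      have hr'n : r' ^ n = r ^ n * (r'/r) ^ n := by
        rw [div_zpow, mul_comm, div_mul_cancel₀ _ (zpow_ne_zero n hr.ne')]
      rw [Real.norm_eq_abs, abs_mul, abs_of_pos (a := r' ^ n) (by positivity), hr'n]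
      calc |(a n s : ℝ)| * (r ^ n * (r'/r) ^ n)
          = (r'/r) ^ n * (|(a n s : ℝ)| * r ^ n) := by ring
        _ ≤ (r'/r) ^ N * (|(a n s : ℝ)| * r ^ n) := by
            apply mul_le_mul_of_nonneg_right hpow
            positivity

/-- For `0 < r' < r < 1` and `S` an extremally disconnected compact Hausdorff space,
the map `θ_{r'} : Z((T))_r(S) → C(S, ℝ)`, `∑ aₙ Tⁿ ↦ (s ↦ ∑ aₙ(s)(r')ⁿ)`, is a
surjective group homomorphism (it is additive and every continuous real-valued
function on `S` lifts). -/
theorem theta_surjective_hom (r r' : ℝ) (h0 : 0 < r') (h1 : r' < r) (h2 : r < 1)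
    (S : Type*) [TopologicalSpace S] [CompactSpace S] [T2Space S]
    [ExtremallyDisconnected S] :
    (∀ a ∈ ZTrCond r S, ∀ b ∈ ZTrCond r S, ∀ s : S,
      ∑' n : ℤ, ((a + b) n s : ℝ) * r' ^ n =
        (∑' n : ℤ, (a n s : ℝ) * r' ^ n) + ∑' n : ℤ, (b n s : ℝ) * r' ^ n) ∧
    (∀ f : C(S, ℝ), ∃ a ∈ ZTrCond r S,
      ∀ s : S, HasSum (fun n : ℤ => (a n s : ℝ) * r' ^ n) (f s)) := by
  classical
  have hr : 0 < r := h0.trans h1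
  constructor
  · -- additivity
    intro a ha b hb s
    have hsa := summable_theta h0 h1 ha s
    have hsb := summable_theta h0 h1 hb s
    rw [show (fun n : ℤ => (((a + b) n s : ℤ) : ℝ) * r' ^ n)
        = fun n : ℤ => (a n s : ℝ) * r' ^ n + (b n s : ℝ) * r' ^ n from ?_]
    · exact Summable.tsum_add hsa hsb
    · funext n
      push_cast [Pi.add_apply, ContinuousMap.add_apply]
      ring
  · -- surjectivity
    intro f
    set M : ℝ := max ‖f‖ r'⁻¹ with hM
    have hM0 : 0 ≤ M := le_trans (norm_nonneg f) (le_max_left _ _)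
    -- the remainder sequence and digit sequence
    set g : ℕ → C(S, ℝ) := gseq r' f with hg
    set d : ℕ → C(S, ℤ) := fun n => intApprox (g n) with hd
    -- uniform bound on remainders
    have hbound : ∀ n s, |g n s| ≤ M := by
      intro n
      induction n with
      | zero =>
        intro s
        exact le_trans (f.norm_coe_le_norm s) (le_max_left _ _)
      | succ n ih =>
        intro s
        have hstep : g (n + 1) s = r'⁻¹ * (g n s - (d n s : ℝ)) := by
          simp [hg, gseq, zToReal, hd]
        rw [hstep, abs_mul, abs_of_pos (inv_pos.mpr h0)]
        have h1' : |g n s - (d n s : ℝ)| ≤ 1 := intApprox_spec (g n) s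
        calc r'⁻¹ * |g n s - (d n s : ℝ)| ≤ r'⁻¹ * 1 :=
              mul_le_mul_of_nonneg_left h1' (inv_pos.mpr h0).le
          _ = r'⁻¹ := mul_one _
          _ ≤ M := le_max_right _ _
    -- digit bound
    have hdbound : ∀ n s, |(d n s : ℝ)| ≤ M + 1 := by
      intro n s
      calc |(d n s : ℝ)| = |g n s - (g n s - (d n s : ℝ))| := by ring_nf
        _ ≤ |g n s| + |g n s - (d n s : ℝ)| := abs_sub _ _
        _ ≤ M + 1 := add_le_add (hbound n s) (intApprox_spec (g n) s)
    -- partial sums identity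
    have hpartial : ∀ s n, f s - ∑ m ∈ Finset.range n, (d m s : ℝ) * r' ^ m
        = r' ^ n * g n s := by
      intro s n
      induction n with
      | zero => simp [hg, gseq]
      | succ n ih =>
        have hstep : g (n + 1) s = r'⁻¹ * (g n s - (d n s : ℝ)) := by
          simp [hg, gseq, zToReal, hd]
        rw [Finset.sum_range_succ, hstep]
        field_simp
        rw [← sub_sub, ih]
        ring
    -- the ℤ-indexed coefficients
    set A : ℤ → C(S, ℤ) := fun n => if 0 ≤ n then d n.toNat else 0 with hA
    have hAnat : ∀ (m : ℕ) (s : S), (A (m : ℤ) s : ℝ) = (d m s : ℝ) := by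
      intro m s
      simp [hA]
    have hAneg : ∀ n : ℤ, n < 0 → A n = 0 := by
      intro n hn
      simp [hA, not_le.mpr hn]
    -- summability with weight r
    have hsumr : ∀ s : S, Summable (fun m : ℕ => |(d m s : ℝ)| * r ^ m) := by
      intro s
      apply Summable.of_nonneg_of_le (fun m => by positivity)
        (fun m => ?_) ((summable_geometric_of_lt_one hr.le h2).mul_left (M + 1))
      exact mul_le_mul_of_nonneg_right (hdbound m s) (pow_nonneg hr.le m)
    have htsumr : ∀ s : S, ∑' m : ℕ, |(d m s : ℝ)| * r ^ m ≤ (M + 1) * (1 - r)⁻¹ := by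
      intro s
      calc ∑' m : ℕ, |(d m s : ℝ)| * r ^ m
          ≤ ∑' m : ℕ, (M + 1) * r ^ m := by
            apply Summable.tsum_le_tsum (fun m =>
              mul_le_mul_of_nonneg_right (hdbound m s) (pow_nonneg hr.le m))
              (hsumr s) ((summable_geometric_of_lt_one hr.le h2).mul_left (M + 1))
        _ = (M + 1) * (1 - r)⁻¹ := by
            rw [tsum_mul_left, tsum_geometric_of_lt_one hr.le h2]
    -- the ℤ-indexed weighted sums (with r)
    have hFsum : ∀ s : S, HasSum (fun n : ℤ => |(A n s : ℝ)| * r ^ n)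
        (∑' m : ℕ, |(d m s : ℝ)| * r ^ m) := by
      intro s
      apply hasSum_int_extend (G := fun m : ℕ => |(d m s : ℝ)| * r ^ m)
      · intro m
        rw [hAnat m s, zpow_natCast]
      · intro n hn
        simp [hAneg n hn]
      · exact (hsumr s).hasSum
    refine ⟨A, ⟨⟨0, fun n hn => hAneg n hn⟩, (M + 1) * (1 - r)⁻¹, fun s =>
      ⟨(hFsum s).summable, by rw [(hFsum s).tsum_eq]; exact htsumr s⟩⟩, ?_⟩
    -- now the HasSum with r'
    intro s
    -- summability over ℕ with r'
    have hsumr' : Summable (fun m : ℕ => (d m s : ℝ) * r' ^ m) := by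
      apply Summable.of_norm_bounded
        (g := fun m : ℕ => (M + 1) * r' ^ m)
        ((summable_geometric_of_lt_one h0.le (h1.trans h2)).mul_left (M + 1))
      intro m
      rw [Real.norm_eq_abs, abs_mul, abs_pow, abs_of_pos h0]
      exact mul_le_mul_of_nonneg_right (hdbound m s) (pow_nonneg h0.le m)
    -- partial sums tend to f s
    have htends : Tendsto (fun n => ∑ m ∈ Finset.range n, (d m s : ℝ) * r' ^ m)
        atTop (𝓝 (f s)) := by
      have heq : ∀ n, ∑ m ∈ Finset.range n, (d m s : ℝ) * r' ^ m
          = f s - r' ^ n * g n s := by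
        intro n
        have := hpartial s n
        linarith
      simp only [heq]
      have hlim : Tendsto (fun n : ℕ => r' ^ n * M) atTop (𝓝 0) := by
        simpa using
          (tendsto_pow_atTop_nhds_zero_of_lt_one h0.le (h1.trans h2)).mul_const M
      have h0' : Tendsto (fun n : ℕ => r' ^ n * g n s) atTop (𝓝 0) := by
        apply squeeze_zero_norm (fun n => ?_) hlim
        rw [Real.norm_eq_abs, abs_mul, abs_pow, abs_of_pos h0]
        exact mul_le_mul_of_nonneg_left (hbound n s) (pow_nonneg h0.le n)
      simpa using tendsto_const_nhds.sub h0'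
    have hHasSumNat : HasSum (fun m : ℕ => (d m s : ℝ) * r' ^ m) (f s) := by
      have h1' := hsumr'.hasSum
      have h2' := h1'.tendsto_sum_nat
      have : ∑' m : ℕ, (d m s : ℝ) * r' ^ m = f s :=
        tendsto_nhds_unique h2' htends
      rwa [this] at h1'
    apply hasSum_int_extend (G := fun m : ℕ => (d m s : ℝ) * r' ^ m) _ _ hHasSumNat
    · intro m
      rw [hAnat m s, zpow_natCast]
    · intro n hn
      simp [hAneg n hn]
end

section
/- Let S be an extremally disconnected compact Hausdorff space, 0 < r < 1, c > 0, δ ∈ (0,1). Then the set C(S, Z((T))_{r,≤c}) of continuous maps into the T-adic space Z((T))_{r,≤c} is in natural bijection with { Σ_{n≫−∞} a_n T^n : a_n ∈ C(S,ℤ), ∀s ∈ S, Σ_n |a_n(s)| r^n ≤ c }; i.e., a map S → Z((T))_{r,≤c} is continuous if and only if each coefficient function a_n : S → ℤ is continuous, and the lower bound on the support can be chosen uniformly in s. -/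
lemma ZTrc.basic_open (r c : ℝ) (f : ZTrc r c) (N : ℤ) :
    @IsOpen _ (tadicTopology r c)
      {g : ZTrc r c | ∀ n ≤ N, (g : ℤ → ℤ) n = (f : ℤ → ℤ) n} :=
  TopologicalSpace.isOpen_generateFrom_of_mem ⟨f, N, rfl⟩

/-- For an extremally disconnected compact Hausdorff space `S`, a map
`F : S → Z((T))_{r,≤c}` is continuous for the `T`-adic topology if and only if each
coefficient function `s ↦ aₙ(s)` is continuous and the lower bound on the support can
be chosen uniformly in `s`; this identifies `C(S, Z((T))_{r,≤c})` with
`{∑ aₙ Tⁿ : aₙ ∈ C(S,ℤ), ∀ s, ∑ |aₙ(s)| rⁿ ≤ c}`. -/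
theorem continuous_into_ZTrc_iff (r c δ : ℝ) (hr0 : 0 < r) (hr1 : r < 1) (hc : 0 < c)
    (hδ0 : 0 < δ) (hδ1 : δ < 1)
    (S : Type*) [TopologicalSpace S] [CompactSpace S] [T2Space S]
    [ExtremallyDisconnected S] (F : S → ZTrc r c) :
    @Continuous S (ZTrc r c) _ (tadicTopology r c) F ↔
      ((∀ n : ℤ, Continuous fun s => (F s : ℤ → ℤ) n) ∧
        ∃ N : ℤ, ∀ s : S, ∀ n < N, (F s : ℤ → ℤ) n = 0) := by
  letI : TopologicalSpace (ZTrc r c) := tadicTopology r c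
  constructor
  · intro hF
    constructor
    · intro n
      have hco : Continuous fun g : ZTrc r c => (g : ℤ → ℤ) n := by
        rw [continuous_discrete_rng]
        intro k
        have heq : (fun g : ZTrc r c => (g : ℤ → ℤ) n) ⁻¹' {k} =
            ⋃ g : {g : ZTrc r c // (g : ℤ → ℤ) n = k},
              {h : ZTrc r c | ∀ m ≤ n, (h : ℤ → ℤ) m = (g.1 : ℤ → ℤ) m} := by
          ext h
          simp only [Set.mem_preimage, Set.mem_singleton_iff, Set.mem_iUnion,
            Set.mem_setOf_eq]
          constructor
          · intro hk; exact ⟨⟨h, hk⟩, fun m _ => rfl⟩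
          · rintro ⟨g, hg⟩; rw [hg n le_rfl]; exact g.2
        rw [heq]
        exact isOpen_iUnion fun g => ZTrc.basic_open r c g.1 n
      exact hco.comp hF
    · -- uniform lower bound on support via compactness
      have hNs : ∀ s : S, ∃ N : ℤ, ∀ n < N, (F s : ℤ → ℤ) n = 0 := fun s => (F s).2.1
      choose Ns hNs using hNs
      let U : S → Set S := fun s =>
        F ⁻¹' {g : ZTrc r c | ∀ n ≤ Ns s - 1, (g : ℤ → ℤ) n = (F s : ℤ → ℤ) n}
      have hUopen : ∀ s, IsOpen (U s) :=
        fun s => (ZTrc.basic_open r c (F s) (Ns s - 1)).preimage hF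
      have hmem : ∀ s, s ∈ U s := fun s n _ => rfl
      obtain ⟨t, ht⟩ := isCompact_univ.elim_finite_subcover U hUopen
        (fun s _ => Set.mem_iUnion.2 ⟨s, hmem s⟩)
      rcases t.eq_empty_or_nonempty with h0 | hne
      · refine ⟨0, fun s => absurd (ht (Set.mem_univ s)) ?_⟩
        simp [h0]
      · refine ⟨t.inf' hne Ns, fun s n hn => ?_⟩
        obtain ⟨u, hu, hsu⟩ := Set.mem_iUnion₂.1 (ht (Set.mem_univ s))
        have h1 : t.inf' hne Ns ≤ Ns u := Finset.inf'_le _ hu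
        have h2 : n ≤ Ns u - 1 := by omega
        have := hsu n h2
        rw [this]
        exact hNs u n (by omega)
  · rintro ⟨hcont, N, hN⟩
    rw [tadicTopology, continuous_generateFrom_iff]
    rintro U ⟨f, M, rfl⟩
    by_cases hf : ∀ n < N, n ≤ M → (f : ℤ → ℤ) n = 0
    · have heq : F ⁻¹' {g : ZTrc r c | ∀ n ≤ M, (g : ℤ → ℤ) n = (f : ℤ → ℤ) n} =
          ⋂ n ∈ Finset.Icc N M, {s | (F s : ℤ → ℤ) n = (f : ℤ → ℤ) n} := by
        ext s
        simp only [Set.mem_preimage, Set.mem_setOf_eq, Set.mem_iInter, Finset.mem_Icc]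
        constructor
        · rintro h n ⟨_, h2⟩; exact h n h2
        · intro h n hnM
          rcases lt_or_ge n N with h1 | h1
          · rw [hN s n h1, hf n h1 hnM]
          · exact h n ⟨h1, hnM⟩
      rw [heq]
      exact isOpen_biInter_finset fun n _ =>
        (isOpen_discrete {(f : ℤ → ℤ) n}).preimage (hcont n)
    · push_neg at hf
      obtain ⟨n, hn1, hn2, hn3⟩ := hf
      have heq : F ⁻¹' {g : ZTrc r c | ∀ n ≤ M, (g : ℤ → ℤ) n = (f : ℤ → ℤ) n} = ∅ := by
        ext s
        simp only [Set.mem_preimage, Set.mem_setOf_eq, Set.mem_empty_iff_false,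
          iff_false]
        intro h
        exact hn3 ((h n hn2).symm.trans (hN s n hn1))
      rw [heq]
      exact isOpen_empty
end
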